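/- arXiv:1508.03431 — 5 statements merged into one kernel-verified Lean document; each statement's English description precedes it below -/
import Mathlib

section
/- Let P be a k×k stochastic matrix all of whose entries are rational numbers with common denominator D, and suppose the Markov chain defined by P has a unique absorbing (recurrent) class. Then the stationary distribution p* (the unique probability vector with p*P = p*) has all entries rational with a common denominator at most √k · 2^(k/2) · D^k. -/
open Matrix Finset

set_option maxHeartbeats 1000000


lemma row_split {n : ℕ} (f : Fin n → ℝ) (i : Fin n) :
    ∑ j, f j = f i + ∑ j ∈ univ.erase i, f j :=
  (Finset.add_sum_erase _ f (mem_univ i)).symm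

/-- Diagonal entries of a weakly diagonally dominant Z-ish matrix are nonneg. -/
lemma diag_nonneg {n : ℕ} (M : Matrix (Fin n) (Fin n) ℝ)
    (hoff : ∀ i j, i ≠ j → M i j ≤ 0) (hrow : ∀ i, 0 ≤ ∑ j, M i j) (i : Fin n) :
    0 ≤ M i i := by
  have h := hrow i
  rw [row_split (M i) i] at h
  have h2 : ∑ j ∈ univ.erase i, M i j ≤ 0 :=
    Finset.sum_nonpos fun j hj => hoff i j (fun he => (Finset.mem_erase.1 hj).1 he.symm)
  linarith

lemma mmatrix_det_bound : ∀ (n : ℕ) (M : Matrix (Fin n) (Fin n) ℝ),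
    (∀ i j, i ≠ j → M i j ≤ 0) → (∀ i, 0 ≤ ∑ j, M i j) →
    0 ≤ M.det ∧ M.det ≤ ∏ i, M i i := by
  intro n
  induction n with
  | zero => intro M _ _; simp [Matrix.det_fin_zero]
  | succ n ih =>
    intro M hoff hrow
    have hdiag := diag_nonneg M hoff hrow
    rcases eq_or_lt_of_le (hdiag 0) with h00 | h00
    · -- M 0 0 = 0 : whole first row is zero
      have h2 : ∀ j ∈ univ.erase (0 : Fin (n+1)), M 0 j ≤ 0 :=
        fun j hj => hoff 0 j (fun he => (Finset.mem_erase.1 hj).1 he.symm)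
      have h3 : ∑ j ∈ univ.erase (0 : Fin (n+1)), M 0 j = 0 := by
        have h := hrow 0
        rw [row_split (M 0) 0, ← h00, zero_add] at h
        exact le_antisymm (Finset.sum_nonpos h2) h
      have hrow0 : ∀ j, M 0 j = 0 := by
        intro j
        rcases eq_or_ne j 0 with rfl | hj
        · exact h00.symm
        · exact (Finset.sum_eq_zero_iff_of_nonpos h2).1 h3 j
            (Finset.mem_erase.2 ⟨hj, mem_univ j⟩)
      have hdet : M.det = 0 := Matrix.det_eq_zero_of_row_eq_zero 0 hrow0
      refine ⟨le_of_eq hdet.symm, ?_⟩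
      rw [hdet, Finset.prod_eq_zero (i := 0) (f := fun i => M i i) (mem_univ 0) (hrow0 0)]
    · -- M 0 0 > 0 : Schur complement step
      set c : Fin (n+1) → ℝ := fun i => if i = 0 then 0 else -(M i 0 / M 0 0) with hc
      set M' : Matrix (Fin (n+1)) (Fin (n+1)) ℝ := fun i j => M i j + c i * M 0 j with hM'
      have hdet' : M'.det = M.det :=
        Matrix.det_eq_of_forall_row_eq_smul_add_const c 0 (by simp [hc]) (fun i j => rfl)
      have hM'col : ∀ i, i ≠ 0 → M' i 0 = 0 := by
        intro i hi
        simp only [hM', hc, if_neg hi]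
        field_simp
        ring
      have hc_nonneg : ∀ i, i ≠ 0 → 0 ≤ c i := by
        intro i hi
        simp only [hc, if_neg hi]
        have h := hoff i 0 hi
        rw [neg_nonneg]
        exact div_nonpos_of_nonpos_of_nonneg h h00.le
      -- the Schur complement
      set S : Matrix (Fin n) (Fin n) ℝ := M'.submatrix Fin.succ Fin.succ with hS
      have hdetM' : M'.det = M 0 0 * S.det := by
        rw [Matrix.det_succ_column_zero]
        rw [Finset.sum_eq_single 0]
        · have : M' 0 0 = M 0 0 := by simp [hM', hc]
          rw [this]
          simp [Fin.succAbove_zero, hS]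
        · intro i _ hi
          rw [hM'col i hi]; ring
        · intro h; exact absurd (mem_univ _) h
      have hSoff : ∀ i j : Fin n, i ≠ j → S i j ≤ 0 := by
        intro i j hij
        have h1 : M i.succ j.succ ≤ 0 := hoff _ _ (by simpa using hij)
        have h2 : c i.succ * M 0 j.succ ≤ 0 :=
          mul_nonpos_of_nonneg_of_nonpos (hc_nonneg _ (Fin.succ_ne_zero i))
            (hoff 0 j.succ (Fin.succ_ne_zero j).symm)
        simp only [hS, Matrix.submatrix_apply]
        simpa [hM'] using add_nonpos h1 h2
      have hSrow : ∀ i : Fin n, 0 ≤ ∑ j, S i j := by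
        intro i
        have hsplit : ∀ r : Fin (n+1), ∑ j : Fin n, M r j.succ = (∑ j, M r j) - M r 0 := by
          intro r
          rw [Fin.sum_univ_succ (f := fun j => M r j)]; ring
        have : ∑ j, S i j = (∑ j, M i.succ j) - M i.succ 0
            + c i.succ * ((∑ j, M 0 j) - M 0 0) := by
          simp only [hS, Matrix.submatrix_apply]
          simp only [hM', Finset.sum_add_distrib, ← Finset.mul_sum]
          rw [hsplit, hsplit]
        rw [this]
        have hcM : c i.succ * M 0 0 = - M i.succ 0 := by
          simp only [hc, if_neg (Fin.succ_ne_zero i)]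
          field_simp
        have h1 := hrow i.succ
        have h2 := hrow 0
        have h3 := hc_nonneg i.succ (Fin.succ_ne_zero i)
        nlinarith [mul_nonneg h3 h2]
      obtain ⟨hS1, hS2⟩ := ih S hSoff hSrow
      have hSdiag := diag_nonneg S hSoff hSrow
      have hprod : ∏ i, S i i ≤ ∏ i : Fin n, M i.succ i.succ := by
        apply Finset.prod_le_prod (fun i _ => hSdiag i)
        intro i _
        have : c i.succ * M 0 i.succ ≤ 0 :=
          mul_nonpos_of_nonneg_of_nonpos (hc_nonneg _ (Fin.succ_ne_zero i))
            (hoff 0 i.succ (Fin.succ_ne_zero i).symm)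
        simp only [hS, Matrix.submatrix_apply]
        simp only [hM']
        linarith
      constructor
      · rw [← hdet', hdetM']
        exact mul_nonneg h00.le hS1
      · rw [← hdet', hdetM', Fin.prod_univ_succ (f := fun i => M i i)]
        exact mul_le_mul_of_nonneg_left (le_trans hS2 hprod) h00.le


/-- An absorbing (recurrent) class of a Markov chain with transition matrix `P`:
a nonempty closed set of states that is minimal among nonempty closed sets. -/
def AbsorbingClass {V : Type} [Fintype V] (P : Matrix V V ℝ) (C : Set V) : Prop :=
  C.Nonempty ∧ (∀ v ∈ C, ∀ u, P v u ≠ 0 → u ∈ C) ∧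
    ∀ C' ⊆ C, C'.Nonempty → (∀ v ∈ C', ∀ u, P v u ≠ 0 → u ∈ C') → C' = C

section Markov
variable {k : ℕ} (P : Matrix (Fin k) (Fin k) ℝ)

/-- every nonempty closed set contains an absorbing class -/
lemma exists_absorbing_subset (S : Set (Fin k)) (hne : S.Nonempty)
    (hcl : ∀ v ∈ S, ∀ u, P v u ≠ 0 → u ∈ S) :
    ∃ C, AbsorbingClass P C ∧ C ⊆ S := by
  classical
  set 𝒮 : Set (Set (Fin k)) :=
    {C' | C' ⊆ S ∧ C'.Nonempty ∧ ∀ v ∈ C', ∀ u, P v u ≠ 0 → u ∈ C'} with h𝒮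
  have hSin : S ∈ 𝒮 := ⟨subset_rfl, hne, hcl⟩
  obtain ⟨C₀, hC₀, hmin⟩ :=
    Set.Finite.exists_minimalFor id 𝒮 (Set.toFinite 𝒮) ⟨S, hSin⟩
  obtain ⟨hC₀S, hC₀ne, hC₀cl⟩ := hC₀
  refine ⟨C₀, ⟨hC₀ne, hC₀cl, ?_⟩, hC₀S⟩
  intro C' hsub hne' hcl'
  exact Set.Subset.antisymm hsub (hmin ⟨hsub.trans hC₀S, hne', hcl'⟩ hsub)

/-- the absolute value of a fixed vector is fixed -/
lemma abs_fixed (hnonneg : ∀ i j, 0 ≤ P i j) (hrowsum : ∀ i, ∑ j, P i j = 1)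
    (x : Fin k → ℝ) (hx : Matrix.vecMul x P = x) :
    Matrix.vecMul (fun i => |x i|) P = fun i => |x i| := by
  funext j
  have hle : ∀ j, |x j| ≤ ∑ i, |x i| * P i j := by
    intro j
    have hxj : ∑ i, x i * P i j = x j := by
      have := congrFun hx j
      simpa [Matrix.vecMul, dotProduct] using this
    calc |x j| = |∑ i, x i * P i j| := by rw [hxj]
    _ ≤ ∑ i, |x i * P i j| := Finset.abs_sum_le_sum_abs _ _
    _ = ∑ i, |x i| * P i j := by
        apply Finset.sum_congr rfl
        intro i _
        rw [abs_mul, abs_of_nonneg (hnonneg i j)]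
  have htot : ∑ j, (∑ i, |x i| * P i j) = ∑ j, |x j| := by
    rw [Finset.sum_comm]
    apply Finset.sum_congr rfl
    intro i _
    rw [← Finset.mul_sum, hrowsum i, mul_one]
  have hzero : ∑ j, ((∑ i, |x i| * P i j) - |x j|) = 0 := by
    rw [Finset.sum_sub_distrib, htot, sub_self]
  have heach := (Finset.sum_eq_zero_iff_of_nonneg
    (fun j _ => sub_nonneg.2 (hle j))).1 hzero j (mem_univ j)
  have : ∑ i, |x i| * P i j = |x j| := by linarith [heach]
  simpa [Matrix.vecMul, dotProduct] using this

/-- support of a nonneg fixed vector is closed -/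
lemma support_closed (hnonneg : ∀ i j, 0 ≤ P i j) (v : Fin k → ℝ) (hv0 : ∀ i, 0 ≤ v i)
    (hv : Matrix.vecMul v P = v) :
    ∀ i ∈ {i | 0 < v i}, ∀ u, P i u ≠ 0 → u ∈ {i | 0 < v i} := by
  intro i hi u hPu
  have hPiu : 0 < P i u := lt_of_le_of_ne (hnonneg i u) (Ne.symm hPu)
  have : v i * P i u ≤ ∑ l, v l * P l u := by
    apply Finset.single_le_sum (f := fun l => v l * P l u)
      (fun l _ => mul_nonneg (hv0 l) (hnonneg l u)) (mem_univ i)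
  have hvu : v u = ∑ l, v l * P l u := by
    conv_lhs => rw [← hv]
    rfl
  have := mul_pos hi hPiu
  simp only [Set.mem_setOf_eq]
  linarith [hvu]

/-- kernel triviality: a fixed vector with zero sum is zero -/
lemma kernel_trivial (hnonneg : ∀ i j, 0 ≤ P i j) (hrowsum : ∀ i, ∑ j, P i j = 1)
    (huniq : ∃! C : Set (Fin k), AbsorbingClass P C)
    (x : Fin k → ℝ) (hx : Matrix.vecMul x P = x) (hsum : ∑ i, x i = 0) :
    x = 0 := by
  by_contra hxne
  obtain ⟨i₀, hi₀⟩ : ∃ i, x i ≠ 0 := by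
    by_contra h
    push_neg at h
    exact hxne (funext h)
  have habs := abs_fixed P hnonneg hrowsum x hx
  -- positive and negative parts
  set xp : Fin k → ℝ := fun i => (x i + |x i|) / 2 with hxp
  set xm : Fin k → ℝ := fun i => (|x i| - x i) / 2 with hxm
  have hxp_fix : Matrix.vecMul xp P = xp := by
    funext j
    have h1 := congrFun hx j
    have h2 := congrFun habs j
    simp only [Matrix.vecMul, dotProduct] at h1 h2 ⊢
    simp only [hxp]
    have hL : ∑ i, (x i + |x i|) / 2 * P i j
        = (∑ i, x i * P i j + ∑ i, |x i| * P i j) / 2 := by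
      rw [← Finset.sum_add_distrib, Finset.sum_div]
      apply Finset.sum_congr rfl
      intro i _
      ring
    rw [hL, h1, h2]
  have hxm_fix : Matrix.vecMul xm P = xm := by
    funext j
    have h1 := congrFun hx j
    have h2 := congrFun habs j
    simp only [Matrix.vecMul, dotProduct] at h1 h2 ⊢
    simp only [hxm]
    have hL : ∑ i, (|x i| - x i) / 2 * P i j
        = (∑ i, |x i| * P i j - ∑ i, x i * P i j) / 2 := by
      rw [← Finset.sum_sub_distrib, Finset.sum_div]
      apply Finset.sum_congr rfl
      intro i _
      ring
    rw [hL, h1, h2]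
  have hxp_nonneg : ∀ i, 0 ≤ xp i := by
    intro i; simp only [hxp]; have := abs_nonneg (x i); have := neg_abs_le (x i); linarith
  have hxm_nonneg : ∀ i, 0 ≤ xm i := by
    intro i; simp only [hxm]; have := le_abs_self (x i); linarith
  have hxp_pos : ∃ i, 0 < xp i := by
    by_contra h
    push_neg at h
    have h0 : ∀ i, xp i = 0 := fun i => le_antisymm (h i) (hxp_nonneg i)
    -- then x ≤ 0 everywhere, with sum 0 ⇒ x = 0
    have hxle : ∀ i, x i ≤ 0 := by
      intro i
      have := h0 i
      simp only [hxp] at this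
      rcases le_or_gt (x i) 0 with h' | h'
      · exact h'
      · rw [abs_of_pos h'] at this; linarith
    have : ∀ i, x i = 0 := by
      intro i
      have := (Finset.sum_eq_zero_iff_of_nonpos (fun i _ => hxle i)).1 hsum i (mem_univ i)
      exact this
    exact hi₀ (this i₀)
  have hxm_pos : ∃ i, 0 < xm i := by
    by_contra h
    push_neg at h
    have h0 : ∀ i, xm i = 0 := fun i => le_antisymm (h i) (hxm_nonneg i)
    have hxge : ∀ i, 0 ≤ x i := by
      intro i
      have := h0 i
      simp only [hxm] at this
      rcases le_or_gt 0 (x i) with h' | h'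
      · exact h'
      · rw [abs_of_neg h'] at this; linarith
    have : ∀ i, x i = 0 := by
      intro i
      exact (Finset.sum_eq_zero_iff_of_nonneg (fun i _ => hxge i)).1 hsum i (mem_univ i)
    exact hi₀ (this i₀)
  -- absorbing classes inside the supports
  obtain ⟨Cp, hCp, hCpsub⟩ := exists_absorbing_subset P {i | 0 < xp i}
    hxp_pos (support_closed P hnonneg xp hxp_nonneg hxp_fix)
  obtain ⟨Cm, hCm, hCmsub⟩ := exists_absorbing_subset P {i | 0 < xm i}
    hxm_pos (support_closed P hnonneg xm hxm_nonneg hxm_fix)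
  obtain ⟨C, _, hCuniq⟩ := huniq
  have hCpC : Cp = C := hCuniq Cp hCp
  have hCmC : Cm = C := hCuniq Cm hCm
  obtain ⟨w, hw⟩ := hCp.1
  have hwp : 0 < xp w := hCpsub hw
  have hwm : 0 < xm w := hCmsub (by rw [hCmC, ← hCpC]; exact hw)
  simp only [hxp] at hwp
  simp only [hxm] at hwm
  rcases le_or_gt (x w) 0 with h | h
  · rw [abs_of_nonpos h] at hwp; linarith
  · rw [abs_of_pos h] at hwm; linarith

end Markov


section Main
variable {m : ℕ}

lemma adj_diag_bound (P : Matrix (Fin (m+1)) (Fin (m+1)) ℝ)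
    (hnonneg : ∀ i j, 0 ≤ P i j) (hrowsum : ∀ i, ∑ j, P i j = 1)
    (i₀ : Fin (m+1)) :
    0 ≤ ((1 - P).updateCol i₀ (fun _ => 1)).adjugate i₀ i₀ ∧
      ((1 - P).updateCol i₀ (fun _ => 1)).adjugate i₀ i₀ ≤ 1 := by
  classical
  set A := (1 - P).updateCol i₀ (fun _ => 1) with hA
  have hAentry : ∀ i j, A i j = if j = i₀ then 1 else (1 - P) i j := by
    intro i j; simp [hA, Matrix.updateCol_apply]
  rw [Matrix.adjugate_apply]
  set N := A.updateRow i₀ (Pi.single i₀ 1) with hN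
  set c : Fin (m+1) → ℝ := fun i => if i = i₀ then 0 else -1 with hc
  set N' : Matrix (Fin (m+1)) (Fin (m+1)) ℝ := fun i j => N i j + c i * N i₀ j with hN'
  have hdN : N'.det = N.det :=
    Matrix.det_eq_of_forall_row_eq_smul_add_const c i₀ (by simp [hc]) (fun i j => rfl)
  have hNval : ∀ i j, N' i j =
      (if i = i₀ then (Pi.single i₀ (1:ℝ) : Fin (m+1) → ℝ) j
       else if j = i₀ then (0:ℝ) else (1 - P) i j : ℝ) := by
    intro i j
    simp only [hN', hN, hc, Matrix.updateRow_apply]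
    rcases eq_or_ne i i₀ with rfl | hi
    · simp
    · simp only [if_neg hi]
      rcases eq_or_ne j i₀ with rfl | hj
      · simp [hAentry, Pi.single_eq_same]
      · simp [hAentry, if_neg hj, Pi.single_eq_of_ne hj]
  set e := Equiv.swap (0 : Fin (m+1)) i₀ with he
  have hdN'' : (N'.submatrix e e).det = N'.det := Matrix.det_submatrix_equiv_self e N'
  set N'' := N'.submatrix e e with hN''
  have he0 : e 0 = i₀ := Equiv.swap_apply_left 0 i₀
  have hesucc : ∀ x : Fin m, e x.succ ≠ i₀ := by
    intro x hx
    have : x.succ = (0 : Fin (m+1)) := by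
      have := e.injective (hx.trans he0.symm)
      exact this
    exact (Fin.succ_ne_zero x) this
  have hrow0 : ∀ j : Fin (m+1), N'' 0 j = if j = 0 then 1 else 0 := by
    intro j
    simp only [hN'', Matrix.submatrix_apply, he0, hNval, if_pos rfl]
    rcases eq_or_ne j 0 with rfl | hj
    · rw [if_pos rfl, he0]
      simp
    · rw [if_neg hj]
      apply Pi.single_eq_of_ne
      intro hej
      exact hj (e.injective (by rw [hej, he0]))
  set S := N''.submatrix Fin.succ Fin.succ with hS
  have hdS : N''.det = S.det := by
    rw [Matrix.det_succ_row_zero, Finset.sum_eq_single 0]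
    · rw [hrow0 0, if_pos rfl]
      simp [Fin.succAbove_zero, hS]
    · intro j _ hj
      rw [hrow0 j, if_neg hj]; ring
    · intro h; exact absurd (mem_univ _) h
  have hSval : ∀ a b : Fin m, S a b = (1 - P) (e a.succ) (e b.succ) := by
    intro a b
    simp only [hS, hN'', Matrix.submatrix_apply, hNval,
      if_neg (hesucc a), if_neg (hesucc b)]
  have hσinj : ∀ a b : Fin m, a ≠ b → e a.succ ≠ e b.succ := by
    intro a b hab h
    exact hab (Fin.succ_injective _ (e.injective h))
  have hsub : ∀ r c' : Fin (m+1), r ≠ c' → (1 - P) r c' = -P r c' := by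
    intro r c' h
    simp [Matrix.sub_apply, Matrix.one_apply_ne h]
  have hdiagsub : ∀ r : Fin (m+1), (1 - P) r r = 1 - P r r := by
    intro r; simp [Matrix.sub_apply, Matrix.one_apply_eq]
  have hoffS : ∀ a b : Fin m, a ≠ b → S a b ≤ 0 := by
    intro a b hab
    rw [hSval, hsub _ _ (hσinj a b hab)]
    simp [hnonneg]
  have hrowS : ∀ a : Fin m, 0 ≤ ∑ b, S a b := by
    intro a
    have hsum : ∑ b : Fin m, (1 - P) (e a.succ) (e b.succ)
        = ∑ c' : Fin (m+1), (1 - P) (e a.succ) c' - (1 - P) (e a.succ) i₀ := by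
      have h1 : ∑ x : Fin (m+1), (1 - P) (e a.succ) (e x)
          = ∑ c' : Fin (m+1), (1 - P) (e a.succ) c' :=
        Fintype.sum_equiv e _ _ (fun x => rfl)
      rw [← h1, Fin.sum_univ_succ (f := fun x : Fin (m+1) => (1 - P) (e a.succ) (e x)), he0]
      ring
    have hfull : ∑ c' : Fin (m+1), (1 - P) (e a.succ) c' = 0 := by
      have : ∑ c' : Fin (m+1), (1 - P) (e a.succ) c'
          = ∑ c' : Fin (m+1), ((1 : Matrix (Fin (m+1)) (Fin (m+1)) ℝ) (e a.succ) c' - P (e a.succ) c') := by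
        apply Finset.sum_congr rfl; intro c' _; simp [Matrix.sub_apply]
      rw [this, Finset.sum_sub_distrib, hrowsum]
      simp [Matrix.one_apply]
    have : ∑ b : Fin m, S a b = P (e a.succ) i₀ := by
      rw [show ∑ b : Fin m, S a b = ∑ b : Fin m, (1 - P) (e a.succ) (e b.succ) from
        Finset.sum_congr rfl (fun b _ => hSval a b)]
      rw [hsum, hfull, hsub _ _ (hesucc a)]
      ring
    rw [this]
    exact hnonneg _ _
  obtain ⟨hS1, hS2⟩ := mmatrix_det_bound m S hoffS hrowS
  have hprod : ∏ a, S a a ≤ 1 := by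
    apply Finset.prod_le_one
    · intro a _
      have := (mmatrix_det_bound m S hoffS hrowS)
      -- diag nonneg directly:
      rw [hSval, hdiagsub]
      have hP1 : P (e a.succ) (e a.succ) ≤ 1 := by
        rw [← hrowsum (e a.succ)]
        exact Finset.single_le_sum (f := fun j => P (e a.succ) j)
          (fun j _ => hnonneg _ j) (mem_univ _)
      linarith
    · intro a _
      rw [hSval, hdiagsub]
      have := hnonneg (e a.succ) (e a.succ)
      linarith
  constructor
  · rw [← hdN, ← hdN'', hdS]; exact hS1
  · rw [← hdN, ← hdN'', hdS]; exact le_trans hS2 hprod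
end Main





/-- Let `P` be a `k × k` stochastic matrix whose entries are
rationals with common denominator `D`, and suppose the Markov chain has a unique
absorbing class. Then the stationary distribution `p*` (a probability vector
with `p* P = p*`) has all entries rational with a common denominator at most
`√k · 2^(k/2) · D^k`. -/
theorem stationary_distribution_denominator_bound
    (k D : ℕ) (hD : 0 < D) (P : Matrix (Fin k) (Fin k) ℝ)
    (hnonneg : ∀ i j, 0 ≤ P i j)
    (hrowsum : ∀ i, ∑ j, P i j = 1)
    (hrat : ∀ i j, ∃ z : ℤ, P i j = (z : ℝ) / D)
    (huniq : ∃! C : Set (Fin k), AbsorbingClass P C)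
    (p : Fin k → ℝ)
    (hp_nonneg : ∀ i, 0 ≤ p i) (hp_sum : ∑ i, p i = 1)
    (hp_stat : Matrix.vecMul p P = p) :
    ∃ q : ℕ, 0 < q ∧
      (q : ℝ) ≤ Real.sqrt k * 2 ^ ((k : ℝ) / 2) * (D : ℝ) ^ k ∧
      ∀ i, ∃ z : ℤ, p i = (z : ℝ) / q := by
  classical
  obtain ⟨m, rfl⟩ : ∃ m, k = m + 1 := by
    cases k with
    | zero => simp at hp_sum
    | succ m => exact ⟨m, rfl⟩
  have hkR : (0:ℝ) < ((m+1 : ℕ) : ℝ) := by positivity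
  -- a coordinate with p i₀ ≥ 1/k
  obtain ⟨i₀, hi₀⟩ : ∃ i : Fin (m+1), 1 / ((m+1 : ℕ) : ℝ) ≤ p i := by
    by_contra h
    push_neg at h
    have hlt : ∑ i, p i < ∑ _i : Fin (m+1), 1 / ((m+1 : ℕ) : ℝ) :=
      Finset.sum_lt_sum_of_nonempty Finset.univ_nonempty (fun i _ => h i)
    rw [hp_sum, Finset.sum_const, Finset.card_univ, Fintype.card_fin, nsmul_eq_mul,
      mul_one_div, div_self (ne_of_gt hkR)] at hlt
    exact lt_irrefl _ hlt
  have hppos : 0 < p i₀ := lt_of_lt_of_le (by positivity) hi₀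
  set A := (1 - P).updateCol i₀ (fun _ => 1) with hA
  have hAentry : ∀ i j, A i j = if j = i₀ then 1 else (1 - P) i j := by
    intro i j; simp [hA, Matrix.updateCol_apply]
  have hone : ∀ (x : Fin (m+1) → ℝ) (j : Fin (m+1)),
      ∑ i, x i * (1 - P) i j = x j - (Matrix.vecMul x P) j := by
    intro x j
    simp only [Matrix.sub_apply, mul_sub, Finset.sum_sub_distrib]
    congr 1
    · rw [Finset.sum_eq_single j]
      · simp [Matrix.one_apply_eq]
      · intro i _ hij
        rw [Matrix.one_apply_ne hij, mul_zero]
      · intro h; exact absurd (mem_univ _) h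
  have hsum_vecMul : ∀ x : Fin (m+1) → ℝ, ∑ j, (Matrix.vecMul x P) j = ∑ i, x i := by
    intro x
    simp only [Matrix.vecMul, dotProduct]
    rw [Finset.sum_comm]
    apply Finset.sum_congr rfl
    intro i _
    rw [← Finset.mul_sum, hrowsum i, mul_one]
  -- p solves the square system
  have hsolve : Matrix.vecMul p A = Pi.single i₀ 1 := by
    funext j
    have hj1 : (Matrix.vecMul p A) j = ∑ i, p i * A i j := rfl
    rw [hj1]
    rcases eq_or_ne j i₀ with rfl | hj
    · have : ∀ i, p i * A i j = p i := by
        intro i; rw [hAentry, if_pos rfl, mul_one]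
      rw [Finset.sum_congr rfl (fun i _ => this i), hp_sum, Pi.single_eq_same]
    · have h2 : ∑ i, p i * A i j = ∑ i, p i * (1 - P) i j := by
        apply Finset.sum_congr rfl
        intro i _
        rw [hAentry, if_neg hj]
      rw [h2, Pi.single_eq_of_ne hj, hone p j, hp_stat, sub_self]
  -- A has nonzero determinant
  have hdetA : A.det ≠ 0 := by
    intro hdet
    have hdetT : Aᵀ.det = 0 := by rw [Matrix.det_transpose]; exact hdet
    obtain ⟨v, hv0, hv⟩ := Matrix.exists_mulVec_eq_zero_iff.2 hdetT
    rw [Matrix.mulVec_transpose] at hv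
    have hcomp : ∀ j, ∑ i, v i * A i j = 0 := fun j => congrFun hv j
    have hvsum : ∑ i, v i = 0 := by
      have h3 := hcomp i₀
      have : ∀ i, v i * A i i₀ = v i := by
        intro i; rw [hAentry, if_pos rfl, mul_one]
      rwa [Finset.sum_congr rfl (fun i _ => this i)] at h3
    have hw : ∀ j, j ≠ i₀ → v j - (Matrix.vecMul v P) j = 0 := by
      intro j hj
      have h3 := hcomp j
      have h2 : ∑ i, v i * A i j = ∑ i, v i * (1 - P) i j := by
        apply Finset.sum_congr rfl
        intro i _
        rw [hAentry, if_neg hj]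
      rw [h2, hone v j] at h3
      exact h3
    have hwtot : ∑ j, (v j - (Matrix.vecMul v P) j) = 0 := by
      rw [Finset.sum_sub_distrib, hsum_vecMul v, sub_self]
    have hwi₀ : v i₀ - (Matrix.vecMul v P) i₀ = 0 := by
      rw [Finset.sum_eq_single i₀] at hwtot
      · exact hwtot
      · intro j _ hj; exact hw j hj
      · intro h; exact absurd (mem_univ _) h
    have hvfix : Matrix.vecMul v P = v := by
      funext j
      rcases eq_or_ne j i₀ with rfl | hj
      · linarith [hwi₀]
      · have := hw j hj; linarith
    exact hv0 (kernel_trivial P hnonneg hrowsum huniq v hvfix hvsum)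
  have hunit : IsUnit A.det := isUnit_iff_ne_zero.2 hdetA
  -- p i = (det A)⁻¹ * adj A i₀ i
  have hp_eq : ∀ i, p i = A.det⁻¹ * A.adjugate i₀ i := by
    have h1 : p = Matrix.vecMul (Pi.single i₀ 1) A⁻¹ := by
      have h2 : Matrix.vecMul (Matrix.vecMul p A) A⁻¹ = Matrix.vecMul p (A * A⁻¹) :=
        Matrix.vecMul_vecMul p A A⁻¹
      rw [Matrix.mul_nonsing_inv A hunit, Matrix.vecMul_one, hsolve] at h2
      exact h2.symm
    intro i
    have h3 : (Matrix.vecMul (Pi.single i₀ (1:ℝ)) A⁻¹) i = A⁻¹ i₀ i := by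
      show ∑ l, (Pi.single i₀ (1:ℝ) : Fin (m+1) → ℝ) l * A⁻¹ l i = A⁻¹ i₀ i
      rw [Finset.sum_eq_single i₀]
      · rw [Pi.single_eq_same, one_mul]
      · intro l _ hl
        rw [Pi.single_eq_of_ne hl, zero_mul]
      · intro h; exact absurd (mem_univ _) h
    rw [h1, h3, Matrix.inv_def, Ring.inverse_eq_inv']
    simp [Matrix.smul_apply]
  -- the adjugate diagonal entry
  obtain ⟨hadj0, hadj1⟩ := adj_diag_bound P hnonneg hrowsum i₀
  rw [← hA] at hadj0 hadj1
  have hpidet : p i₀ * A.det = A.adjugate i₀ i₀ := by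
    rw [hp_eq i₀]
    field_simp
  have hdet_pos : 0 < A.det := by
    rcases lt_trichotomy A.det 0 with h | h | h
    · nlinarith [hpidet, hadj0, hppos]
    · exact absurd h hdetA
    · exact h
  have hdet_le : A.det ≤ ((m+1 : ℕ) : ℝ) := by
    have h5 : (1 / ((m+1:ℕ):ℝ)) * A.det ≤ 1 := by
      calc (1 / ((m+1:ℕ):ℝ)) * A.det ≤ p i₀ * A.det :=
        mul_le_mul_of_nonneg_right hi₀ hdet_pos.le
      _ = A.adjugate i₀ i₀ := hpidet
      _ ≤ 1 := hadj1
    rw [one_div, inv_mul_eq_div, div_le_one hkR] at h5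
    exact h5
  -- integer matrix B
  set zf : Fin (m+1) → Fin (m+1) → ℤ := fun i j => Classical.choose (hrat i j) with hzf
  have hzf_spec : ∀ i j, P i j = (zf i j : ℝ) / D := fun i j => Classical.choose_spec (hrat i j)
  set B : Matrix (Fin (m+1)) (Fin (m+1)) ℤ :=
    fun i j => if j = i₀ then (D:ℤ) else (if i = j then (D:ℤ) else 0) - zf i j with hB
  have hDne : (D:ℝ) ≠ 0 := Nat.cast_ne_zero.2 hD.ne'
  have hBA : B.map (Int.cast : ℤ → ℝ) = (D:ℝ) • A := by
    ext i j
    simp only [Matrix.map_apply, Matrix.smul_apply, smul_eq_mul, hAentry]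
    simp only [hB]
    rcases eq_or_ne j i₀ with rfl | hj
    · simp
    · rw [if_neg hj, if_neg hj, Matrix.sub_apply]
      rw [hzf_spec i j]
      rcases eq_or_ne i j with rfl | hij
      · rw [Matrix.one_apply_eq, if_pos rfl]
        push_cast
        field_simp
      · rw [Matrix.one_apply_ne hij, if_neg hij]
        push_cast
        field_simp
        ring
  have hcard : Fintype.card (Fin (m+1)) = m + 1 := Fintype.card_fin (m+1)
  -- determinant relation
  have hdetB : ((B.det : ℤ) : ℝ) = (D:ℝ)^(m+1) * A.det := by
    have h1 := RingHom.map_det (Int.castRingHom ℝ) B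
    rw [RingHom.mapMatrix_apply] at h1
    have h2 : B.map ⇑(Int.castRingHom ℝ) = (D:ℝ) • A := hBA
    rw [show ((B.det : ℤ) : ℝ) = (Int.castRingHom ℝ) B.det from rfl, h1, h2,
      Matrix.det_smul, hcard]
  -- adjugate relation
  have hadjB : ∀ i, ((B.adjugate i₀ i : ℤ) : ℝ) = (D:ℝ)^m * A.adjugate i₀ i := by
    intro i
    have h1 := RingHom.map_adjugate (Int.castRingHom ℝ) B
    have h2 : (Int.castRingHom ℝ).mapMatrix B = (D:ℝ) • A := hBA
    rw [h2, Matrix.adjugate_smul] at h1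
    have h3 : ((B.adjugate i₀ i : ℤ) : ℝ)
        = ((D:ℝ) ^ (Fintype.card (Fin (m+1)) - 1) • A.adjugate) i₀ i :=
      congrFun (congrFun h1 i₀) i
    rw [h3, Matrix.smul_apply, hcard]
    simp
  have hdetB_pos : 0 < B.det := by
    have h0 : (0:ℝ) < ((B.det : ℤ) : ℝ) := by
      rw [hdetB]; positivity
    exact_mod_cast h0
  have hq : ((B.det.toNat : ℕ) : ℝ) = (D:ℝ)^(m+1) * A.det := by
    have h0 : ((B.det.toNat : ℕ) : ℝ) = ((B.det : ℤ) : ℝ) := by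
      rw [← Int.cast_natCast, Int.toNat_of_nonneg hdetB_pos.le]
    rw [h0, hdetB]
  refine ⟨B.det.toNat, by omega, ?_, ?_⟩
  · rw [hq]
    have hstep1 : (D:ℝ)^(m+1) * A.det ≤ ((m+1:ℕ):ℝ) * (D:ℝ)^(m+1) := by
      have hDk : (0:ℝ) < (D:ℝ)^(m+1) := by positivity
      nlinarith [hdet_le]
    refine le_trans hstep1 ?_
    have hkle : ((m+1:ℕ):ℝ) ≤ Real.sqrt (m+1:ℕ) * 2 ^ (((m+1:ℕ) : ℝ) / 2) := by
      have h2 : (2:ℝ) ^ (((m+1:ℕ) : ℝ) / 2) = Real.sqrt ((2:ℝ)^(m+1)) := by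
        rw [Real.sqrt_eq_rpow, ← Real.rpow_natCast 2 (m+1), ← Real.rpow_mul (by norm_num)]
        congr 1
        push_cast
        ring
      rw [h2, ← Real.sqrt_mul (by positivity)]
      have hk2 : (((m+1:ℕ):ℝ))^2 ≤ ((m+1:ℕ):ℝ) * 2^(m+1) := by
        have hle : ((m+1:ℕ):ℝ) ≤ (2:ℝ)^(m+1) := by
          exact_mod_cast le_of_lt ((Nat.lt_two_pow_self (n := m+1)))
        nlinarith [hkR]
      calc ((m+1:ℕ):ℝ) = Real.sqrt ((((m+1:ℕ):ℝ))^2) := by rw [Real.sqrt_sq hkR.le]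
      _ ≤ Real.sqrt (((m+1:ℕ):ℝ) * 2^(m+1)) := Real.sqrt_le_sqrt hk2
    have hDk : (0:ℝ) ≤ (D:ℝ)^(m+1) := by positivity
    calc ((m+1:ℕ):ℝ) * (D:ℝ)^(m+1)
        ≤ (Real.sqrt (m+1:ℕ) * 2 ^ (((m+1:ℕ) : ℝ) / 2)) * (D:ℝ)^(m+1) :=
          mul_le_mul_of_nonneg_right hkle hDk
      _ = Real.sqrt (m+1:ℕ) * 2 ^ (((m+1:ℕ) : ℝ) / 2) * (D:ℝ)^(m+1) := by ring
  · intro i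
    refine ⟨(D:ℤ) * B.adjugate i₀ i, ?_⟩
    rw [hq]
    push_cast
    rw [hadjB i, hp_eq i]
    field_simp
    ring
end

section
/- In a BWR-game, suppose there exists a constant m such that for every position v the local value M̄[r](v) equals m, where M̄[r](v) is the maximum of r(v,u) over outgoing arcs if v is a White position, the minimum if v is a Black position, and the p(v,·)-weighted average if v is a random position. Then every locally optimal pure stationary strategy is optimal, and the game is ergodic with value m from every initial position. -/
open Matrix Filter

/-- A BWR-game: finite digraph with no sinks, positions partitioned into
White (`player v = 0`), Black (`player v = 1`) and Random (`player v = 2`),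
positive transition probabilities on arcs out of random positions summing to 1,
and local rewards on arcs. -/
structure BWR (V : Type) [Fintype V] [DecidableEq V] where
  succ : V → Finset V
  succ_nonempty : ∀ v, (succ v).Nonempty
  player : V → Fin 3
  p : V → V → ℝ
  p_mem : ∀ v u, player v = 2 → (u ∈ succ v ↔ 0 < p v u)
  p_zero : ∀ v u, player v = 2 → u ∉ succ v → p v u = 0
  p_sum : ∀ v, player v = 2 → ∑ u ∈ succ v, p v u = 1
  r : V → V → ℝ

namespace BWR

variable {V : Type} [Fintype V] [DecidableEq V] (G : BWR V)

/-- A (pure stationary) situation is valid if it moves along arcs. -/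
def Valid (s : V → V) : Prop := ∀ v, s v ∈ G.succ v

/-- Combine a White strategy and a Black strategy into one situation. -/
def combine (sW sB : V → V) : V → V := fun v => if G.player v = 0 then sW v else sB v

/-- Transition matrix of the Markov chain obtained by fixing situation `s`. -/
noncomputable def P (s : V → V) : Matrix V V ℝ :=
  Matrix.of fun v u => if G.player v = 2 then G.p v u else if s v = u then 1 else 0

/-- Expected one-step reward under situation `s`. -/
noncomputable def rbar (s : V → V) : V → ℝ :=
  fun v => if G.player v = 2 then ∑ u ∈ G.succ v, G.p v u * G.r v u else G.r v (s v)

/-- Limiting mean payoff from initial position `v` under situation `s`. -/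
noncomputable def payoff (s : V → V) (v : V) : ℝ :=
  Filter.liminf
    (fun T : ℕ => (∑ t ∈ Finset.range (T + 1), (G.P s ^ t).mulVec (G.rbar s)) v / (T + 1))
    Filter.atTop

/-- `μ` is the value function of the game: some saddle point in pure stationary
strategies realizes it uniformly. -/
def IsValue (μ : V → ℝ) : Prop :=
  ∃ sW sB : V → V, G.Valid (G.combine sW sB) ∧
    (∀ v, μ v = G.payoff (G.combine sW sB) v) ∧
    (∀ sW' : V → V, G.Valid (G.combine sW' sB) → ∀ v, G.payoff (G.combine sW' sB) v ≤ μ v) ∧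
    (∀ sB' : V → V, G.Valid (G.combine sW sB') → ∀ v, μ v ≤ G.payoff (G.combine sW sB') v)

/-- The local value `M̄[r](v)`. -/
noncomputable def mbar : V → ℝ := fun v =>
  if G.player v = 0 then (G.succ v).sup' (G.succ_nonempty v) (fun u => G.r v u)
  else if G.player v = 1 then (G.succ v).inf' (G.succ_nonempty v) (fun u => G.r v u)
  else ∑ u ∈ G.succ v, G.p v u * G.r v u

/-- A locally optimal situation achieves the local value at every controlled position. -/
def LocallyOptimal (s : V → V) : Prop :=
  G.Valid s ∧ ∀ v, G.player v ≠ 2 → G.r v (s v) = G.mbar v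

end BWR

namespace BWR

variable {V : Type} [Fintype V] [DecidableEq V] (G : BWR V)

lemma P_nonneg (s : V → V) (v u : V) : 0 ≤ G.P s v u := by
  unfold P
  simp only [Matrix.of_apply]
  split_ifs with h1 h2
  · by_cases hu : u ∈ G.succ v
    · exact le_of_lt ((G.p_mem v u h1).1 hu)
    · rw [G.p_zero v u h1 hu]
  · exact zero_le_one
  · exact le_refl 0

lemma P_row_sum (s : V → V) (v : V) : ∑ u, G.P s v u = 1 := by
  unfold P
  simp only [Matrix.of_apply]
  by_cases h : G.player v = 2
  · simp only [h, if_true]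
    rw [← Finset.sum_subset (Finset.subset_univ (G.succ v))]
    · exact G.p_sum v h
    · intro u _ hu; exact G.p_zero v u h hu
  · simp [h, Finset.sum_ite_eq]

lemma mulVec_le {s : V → V} {f : V → ℝ} {a : ℝ} (hf : ∀ u, f u ≤ a) (v : V) :
    (G.P s).mulVec f v ≤ a := by
  have : (G.P s).mulVec f v ≤ ∑ u, G.P s v u * a := by
    apply Finset.sum_le_sum
    intro u _
    exact mul_le_mul_of_nonneg_left (hf u) (G.P_nonneg s v u)
  calc (G.P s).mulVec f v ≤ ∑ u, G.P s v u * a := this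
    _ = (∑ u, G.P s v u) * a := by rw [Finset.sum_mul]
    _ = a := by rw [G.P_row_sum s v, one_mul]

lemma le_mulVec {s : V → V} {f : V → ℝ} {a : ℝ} (hf : ∀ u, a ≤ f u) (v : V) :
    a ≤ (G.P s).mulVec f v := by
  have : ∑ u, G.P s v u * a ≤ (G.P s).mulVec f v := by
    apply Finset.sum_le_sum
    intro u _
    exact mul_le_mul_of_nonneg_left (hf u) (G.P_nonneg s v u)
  calc a = (∑ u, G.P s v u) * a := by rw [G.P_row_sum s v, one_mul]
    _ = ∑ u, G.P s v u * a := by rw [Finset.sum_mul]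
    _ ≤ _ := this

lemma pow_mulVec_le {s : V → V} {f : V → ℝ} {a : ℝ} (hf : ∀ u, f u ≤ a) (t : ℕ) (v : V) :
    ((G.P s) ^ t).mulVec f v ≤ a := by
  induction t generalizing v with
  | zero => simpa [pow_zero, Matrix.one_mulVec] using hf v
  | succ n ih =>
      rw [pow_succ', ← Matrix.mulVec_mulVec]
      exact G.mulVec_le (fun u => ih u) v

lemma le_pow_mulVec {s : V → V} {f : V → ℝ} {a : ℝ} (hf : ∀ u, a ≤ f u) (t : ℕ) (v : V) :
    a ≤ ((G.P s) ^ t).mulVec f v := by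
  induction t generalizing v with
  | zero => simpa [pow_zero, Matrix.one_mulVec] using hf v
  | succ n ih =>
      rw [pow_succ', ← Matrix.mulVec_mulVec]
      exact G.le_mulVec (fun u => ih u) v

lemma seq_le {s : V → V} {a : ℝ} (hf : ∀ u, G.rbar s u ≤ a) (T : ℕ) (v : V) :
    (∑ t ∈ Finset.range (T + 1), ((G.P s) ^ t).mulVec (G.rbar s)) v / (T + 1) ≤ a := by
  rw [div_le_iff₀ (by positivity)]
  have : (∑ t ∈ Finset.range (T + 1), ((G.P s) ^ t).mulVec (G.rbar s)) v
      = ∑ t ∈ Finset.range (T + 1), ((G.P s) ^ t).mulVec (G.rbar s) v := by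
    simp [Finset.sum_apply]
  rw [this]
  calc ∑ t ∈ Finset.range (T + 1), ((G.P s) ^ t).mulVec (G.rbar s) v
      ≤ ∑ _t ∈ Finset.range (T + 1), a :=
        Finset.sum_le_sum fun t _ => G.pow_mulVec_le hf t v
    _ = a * (T + 1) := by simp [mul_comm]

lemma le_seq {s : V → V} {a : ℝ} (hf : ∀ u, a ≤ G.rbar s u) (T : ℕ) (v : V) :
    a ≤ (∑ t ∈ Finset.range (T + 1), ((G.P s) ^ t).mulVec (G.rbar s)) v / (T + 1) := by
  rw [le_div_iff₀ (by positivity)]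
  have : (∑ t ∈ Finset.range (T + 1), ((G.P s) ^ t).mulVec (G.rbar s)) v
      = ∑ t ∈ Finset.range (T + 1), ((G.P s) ^ t).mulVec (G.rbar s) v := by
    simp [Finset.sum_apply]
  rw [this]
  calc a * (T + 1) = ∑ _t ∈ Finset.range (T + 1), a := by simp [mul_comm]
    _ ≤ _ := Finset.sum_le_sum fun t _ => G.le_pow_mulVec hf t v

lemma payoff_le {s : V → V} {a c : ℝ} (hf : ∀ u, G.rbar s u ≤ a)
    (hc : ∀ u, c ≤ G.rbar s u) (v : V) : G.payoff s v ≤ a := by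
  apply Filter.liminf_le_of_le
  · exact ⟨c, Filter.eventually_map.2 (Filter.Eventually.of_forall fun T => G.le_seq hc T v)⟩
  · intro b hb
    obtain ⟨T, hT⟩ := hb.exists
    exact hT.trans (G.seq_le hf T v)

lemma le_payoff {s : V → V} {a c : ℝ} (hf : ∀ u, a ≤ G.rbar s u)
    (hc : ∀ u, G.rbar s u ≤ c) (v : V) : a ≤ G.payoff s v := by
  apply Filter.le_liminf_of_le
  · exact Filter.isCoboundedUnder_ge_of_le _ fun T => G.seq_le hc T v
  · exact Filter.Eventually.of_forall fun T => G.le_seq hf T v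

end BWR

/-- If in a BWR-game there is a constant `m` with `M̄[r](v) = m`
for all positions `v`, then every locally optimal pure stationary situation is a
saddle point, and the game is ergodic with value `m` from every initial position. -/
theorem bwr_constant_local_value_ergodic
    {V : Type} [Fintype V] [DecidableEq V] (G : BWR V) (m : ℝ)
    (hm : ∀ v, G.mbar v = m) :
    ∀ s : V → V, G.LocallyOptimal s →
      (∀ v, G.payoff s v = m) ∧
      (∀ sW' : V → V, G.Valid (G.combine sW' s) → ∀ v, G.payoff (G.combine sW' s) v ≤ m) ∧
      (∀ sB' : V → V, G.Valid (G.combine s sB') → ∀ v, m ≤ G.payoff (G.combine s sB') v) := by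
  intro s hs
  obtain ⟨hval, hloc⟩ := hs
  -- rbar of locally optimal s is constantly m
  have hrs : ∀ v, G.rbar s v = m := by
    intro v
    unfold BWR.rbar
    by_cases h2 : G.player v = 2
    · rw [if_pos h2, ← hm v]
      unfold BWR.mbar
      have h0 : G.player v ≠ 0 := by rw [h2]; decide
      have h1 : G.player v ≠ 1 := by rw [h2]; decide
      rw [if_neg h0, if_neg h1]
    · rw [if_neg h2, hloc v h2, hm v]
  refine ⟨?_, ?_, ?_⟩
  · intro v
    exact le_antisymm (G.payoff_le (fun u => (hrs u).le) (fun u => (hrs u).ge) v)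
      (G.le_payoff (fun u => (hrs u).ge) (fun u => (hrs u).le) v)
  · intro sW' hW v
    have hub : ∀ u, G.rbar (G.combine sW' s) u ≤ m := by
      intro u
      unfold BWR.rbar
      by_cases h2 : G.player u = 2
      · rw [if_pos h2, ← hm u]
        unfold BWR.mbar
        have h0 : G.player u ≠ 0 := by rw [h2]; decide
        have h1 : G.player u ≠ 1 := by rw [h2]; decide
        rw [if_neg h0, if_neg h1]
      · rw [if_neg h2]
        by_cases h0 : G.player u = 0
        · have hmem : G.combine sW' s u ∈ G.succ u := hW u
          have : G.combine sW' s u = sW' u := by unfold BWR.combine; rw [if_pos h0]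
          rw [this] at hmem ⊢
          rw [← hm u]
          unfold BWR.mbar
          rw [if_pos h0]
          exact Finset.le_sup' _ hmem
        · have : G.combine sW' s u = s u := by unfold BWR.combine; rw [if_neg h0]
          rw [this, hloc u h2, hm u]
    have hlb : ∀ u, Finset.univ.inf' ⟨v, Finset.mem_univ v⟩ (G.rbar (G.combine sW' s))
        ≤ G.rbar (G.combine sW' s) u := fun u => Finset.inf'_le _ (Finset.mem_univ u)
    exact G.payoff_le hub hlb v
  · intro sB' hB v
    have hlb : ∀ u, m ≤ G.rbar (G.combine s sB') u := by
      intro u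
      unfold BWR.rbar
      by_cases h2 : G.player u = 2
      · rw [if_pos h2, ← hm u]
        unfold BWR.mbar
        have h0 : G.player u ≠ 0 := by rw [h2]; decide
        have h1 : G.player u ≠ 1 := by rw [h2]; decide
        rw [if_neg h0, if_neg h1]
      · rw [if_neg h2]
        by_cases h0 : G.player u = 0
        · have : G.combine s sB' u = s u := by unfold BWR.combine; rw [if_pos h0]
          rw [this, hloc u h2, hm u]
        · have hmem : G.combine s sB' u ∈ G.succ u := hB u
          have heq : G.combine s sB' u = sB' u := by unfold BWR.combine; rw [if_neg h0]
          rw [heq] at hmem ⊢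
          rw [← hm u]
          unfold BWR.mbar
          have h1 : G.player u = 1 := by omega
          rw [if_neg h0, if_pos h1]
          exact Finset.inf'_le _ hmem
    have hub : ∀ u, G.rbar (G.combine s sB') u ≤ Finset.univ.sup' ⟨v, Finset.mem_univ v⟩
        (G.rbar (G.combine s sB')) := fun u => Finset.le_sup' _ (Finset.mem_univ u)
    exact G.le_payoff hlb hub v
end

section
/- A digraph G = (V_W ∪ V_B ∪ V_R, E) with no sinks is ergodic (i.e., every BWR-game on G has position-independent value) if and only if G admits no contra-ergodic partition. -/
open Matrix Filter

/-- A contra-ergodic partition of a digraph with position partition `player`. -/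
def ContraErgodicPartition {V : Type} [Fintype V] [DecidableEq V]
    (succ : V → Finset V) (player : V → Fin 3) (Vp Vm : Set V) : Prop :=
  Vp.Nonempty ∧ Vm.Nonempty ∧ Disjoint Vp Vm ∧
  -- (ii) White and Random cannot leave V⁻ ; Black and Random cannot leave V⁺
  (∀ v ∈ Vm, (player v = 0 ∨ player v = 2) → ∀ u ∈ succ v, u ∈ Vm) ∧
  (∀ v ∈ Vp, (player v = 1 ∨ player v = 2) → ∀ u ∈ succ v, u ∈ Vp) ∧
  -- (iii) White cannot be forced to leave V⁺, Black cannot be forced to leave V⁻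
  (∀ v ∈ Vp, player v = 0 → ∃ u ∈ succ v, u ∈ Vp) ∧
  (∀ v ∈ Vm, player v = 1 → ∃ u ∈ succ v, u ∈ Vm)

namespace ContraAux

set_option linter.unusedSectionVars false

variable {V : Type} [Fintype V] [DecidableEq V]

/-- Row-stochastic matrix. -/
def RS (P : Matrix V V ℝ) : Prop := (∀ v u, 0 ≤ P v u) ∧ ∀ v, ∑ u, P v u = 1

lemma RS.mulVec_le {P : Matrix V V ℝ} (h : RS P) {x : V → ℝ} {C : ℝ}
    (hx : ∀ u, x u ≤ C) (v : V) : P.mulVec x v ≤ C := by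
  have : P.mulVec x v = ∑ u, P v u * x u := by
    simp [Matrix.mulVec, dotProduct]
  rw [this]
  calc ∑ u, P v u * x u ≤ ∑ u, P v u * C := by
        refine Finset.sum_le_sum fun u _ => ?_
        exact mul_le_mul_of_nonneg_left (hx u) (h.1 v u)
    _ = C := by rw [← Finset.sum_mul, h.2 v, one_mul]

lemma RS.le_mulVec {P : Matrix V V ℝ} (h : RS P) {x : V → ℝ} {C : ℝ}
    (hx : ∀ u, C ≤ x u) (v : V) : C ≤ P.mulVec x v := by
  have : P.mulVec x v = ∑ u, P v u * x u := by
    simp [Matrix.mulVec, dotProduct]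
  rw [this]
  calc C = ∑ u, P v u * C := by rw [← Finset.sum_mul, h.2 v, one_mul]
    _ ≤ ∑ u, P v u * x u := by
        refine Finset.sum_le_sum fun u _ => ?_
        exact mul_le_mul_of_nonneg_left (hx u) (h.1 v u)

lemma RS.abs_mulVec_le {P : Matrix V V ℝ} (h : RS P) {x : V → ℝ} {C : ℝ}
    (hx : ∀ u, |x u| ≤ C) (v : V) : |P.mulVec x v| ≤ C := by
  rw [abs_le]
  constructor
  · exact h.le_mulVec (fun u => (abs_le.mp (hx u)).1) v
  · exact h.mulVec_le (fun u => (abs_le.mp (hx u)).2) v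

lemma RS.mulVec_mono {P : Matrix V V ℝ} (h : RS P) {x y : V → ℝ}
    (hxy : ∀ u, x u ≤ y u) (v : V) : P.mulVec x v ≤ P.mulVec y v := by
  have hx : P.mulVec x v = ∑ u, P v u * x u := by simp [Matrix.mulVec, dotProduct]
  have hy : P.mulVec y v = ∑ u, P v u * y u := by simp [Matrix.mulVec, dotProduct]
  rw [hx, hy]
  exact Finset.sum_le_sum fun u _ => mul_le_mul_of_nonneg_left (hxy u) (h.1 v u)

lemma pow_mulVec_succ (P : Matrix V V ℝ) (x : V → ℝ) (t : ℕ) :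
    (P ^ (t+1)).mulVec x = P.mulVec ((P ^ t).mulVec x) := by
  rw [Matrix.mulVec_mulVec, ← pow_succ']

lemma pow_mulVec_succ' (P : Matrix V V ℝ) (x : V → ℝ) (t : ℕ) :
    (P ^ (t+1)).mulVec x = (P ^ t).mulVec (P.mulVec x) := by
  rw [Matrix.mulVec_mulVec, ← pow_succ]

lemma abs_pow_mulVec_le {P : Matrix V V ℝ} (h : RS P) {x : V → ℝ} {C : ℝ}
    (hx : ∀ u, |x u| ≤ C) : ∀ (t : ℕ) (v : V), |(P ^ t).mulVec x v| ≤ C := by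
  intro t
  induction t with
  | zero => intro v; simpa [Matrix.one_mulVec] using hx v
  | succ t ih =>
      intro v
      rw [pow_mulVec_succ]
      exact h.abs_mulVec_le ih v

lemma pow_mulVec_harmonic {P : Matrix V V ℝ} {g : V → ℝ}
    (hg : P.mulVec g = g) : ∀ t : ℕ, (P ^ t).mulVec g = g := by
  intro t
  induction t with
  | zero => simp [Matrix.one_mulVec]
  | succ t ih => rw [pow_mulVec_succ, ih, hg]

lemma pow_mulVec_le_of_le {P : Matrix V V ℝ} (h : RS P) {g : V → ℝ}
    (hg : ∀ v, P.mulVec g v ≤ g v) : ∀ (t : ℕ) (v : V), (P ^ t).mulVec g v ≤ g v := by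
  intro t
  induction t with
  | zero => intro v; simp [Matrix.one_mulVec]
  | succ t ih =>
      intro v
      rw [pow_mulVec_succ]
      calc P.mulVec ((P ^ t).mulVec g) v ≤ P.mulVec g v := h.mulVec_mono ih v
        _ ≤ g v := hg v

/-- every function has a bound on a fintype -/
lemma exists_bound (x : V → ℝ) : ∃ C : ℝ, ∀ v, |x v| ≤ C := by
  rcases isEmpty_or_nonempty V with h | h
  · exact ⟨0, fun v => absurd (h.false v) (by simp)⟩
  · refine ⟨Finset.univ.sup' Finset.univ_nonempty (fun v => |x v|), fun v => ?_⟩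
    exact Finset.le_sup' (fun v => |x v|) (Finset.mem_univ v)

lemma tendsto_div_succ_zero {C : ℝ} {u : ℕ → ℝ} (hu : ∀ T : ℕ, |u T| ≤ C) :
    Tendsto (fun T : ℕ => u T / (T + 1)) atTop (nhds 0) := by
  apply squeeze_zero_norm (a := fun T : ℕ => C * (1 / ((T:ℝ) + 1)))
  · intro T
    have h1 : (0:ℝ) < (T:ℝ) + 1 := by positivity
    have : ‖u T / ((T:ℝ) + 1)‖ = |u T| / ((T:ℝ)+1) := by
      rw [Real.norm_eq_abs, abs_div, abs_of_pos h1]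
    rw [this]
    rw [div_le_iff₀ h1]
    calc |u T| ≤ C := hu T
      _ = C * (1/((T:ℝ)+1)) * ((T:ℝ)+1) := by field_simp
  · simpa using (tendsto_one_div_add_atTop_nhds_zero_nat).const_mul C


lemma decomp (P : Matrix V V ℝ) (hP : RS P) (w : V → ℝ) :
    ∃ g b : V → ℝ, P.mulVec g = g ∧ w = fun v => g v + (b v - P.mulVec b v) := by
  classical
  set f : (V → ℝ) →ₗ[ℝ] (V → ℝ) := LinearMap.id - P.mulVecLin with hf
  have hker : ∀ x ∈ LinearMap.ker f, P.mulVec x = x := by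
    intro x hx
    have : x - P.mulVec x = 0 := by
      simpa [hf, Matrix.mulVecLin_apply, sub_eq_zero] using hx
    have := sub_eq_zero.mp this
    exact this.symm
  have hdisj : LinearMap.ker f ⊓ LinearMap.range f = ⊥ := by
    rw [eq_bot_iff]
    rintro x ⟨hx1, hx2⟩
    obtain ⟨y, hy⟩ := hx2
    have hxP : P.mulVec x = x := hker x hx1
    have hxy : x = fun v => y v - P.mulVec y v := by
      rw [← hy]; funext v; simp [hf, Matrix.mulVecLin_apply]
    obtain ⟨C, hC⟩ := exists_bound y
    -- show x = 0
    have hx0 : ∀ v, x v = 0 := by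
      intro v
      have key : ∀ T : ℕ, ((T:ℝ) + 1) * x v = y v - (P ^ (T+1)).mulVec y v := by
        intro T
        have h1 : ∀ t : ℕ, (P ^ t).mulVec x = x := pow_mulVec_harmonic hxP
        have h2 : ∀ t : ℕ, (P ^ t).mulVec x v
            = (P ^ t).mulVec y v - (P ^ (t+1)).mulVec y v := by
          intro t
          conv_lhs => rw [hxy]
          have : (fun v => y v - P.mulVec y v) = y - P.mulVec y := rfl
          rw [this, Matrix.mulVec_sub, pow_mulVec_succ' P y t]
          simp
        have h3 : ∑ t ∈ Finset.range (T+1), (P ^ t).mulVec x v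
            = y v - (P ^ (T+1)).mulVec y v := by
          calc ∑ t ∈ Finset.range (T+1), (P ^ t).mulVec x v
              = ∑ t ∈ Finset.range (T+1),
                ((fun t => (P ^ t).mulVec y v) t - (fun t => (P ^ t).mulVec y v) (t+1)) := by
                exact Finset.sum_congr rfl fun t _ => h2 t
            _ = (P ^ 0).mulVec y v - (P ^ (T+1)).mulVec y v :=
                Finset.sum_range_sub' (fun t => (P ^ t).mulVec y v) (T+1)
            _ = y v - (P ^ (T+1)).mulVec y v := by simp [Matrix.one_mulVec]
        have h4 : ∑ t ∈ Finset.range (T+1), (P ^ t).mulVec x v = ((T:ℝ)+1) * x v := by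
          rw [Finset.sum_congr rfl fun t _ => by rw [h1 t]]
          simp [mul_comm]
        rw [← h4, h3]
      have habs : ∀ T : ℕ, |x v| ≤ 2 * C / ((T:ℝ) + 1) := by
        intro T
        have h1 : (0:ℝ) < (T:ℝ) + 1 := by positivity
        rw [le_div_iff₀ h1, mul_comm]
        calc ((T:ℝ)+1) * |x v| = |((T:ℝ)+1) * x v| := by
              rw [abs_mul, abs_of_pos h1]
          _ = |y v - (P ^ (T+1)).mulVec y v| := by rw [key T]
          _ ≤ |y v| + |(P ^ (T+1)).mulVec y v| := abs_sub _ _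
          _ ≤ C + C := add_le_add (hC v) (abs_pow_mulVec_le hP hC (T+1) v)
          _ = 2 * C := by ring
      have : Tendsto (fun T : ℕ => 2 * C / ((T:ℝ) + 1)) atTop (nhds 0) := by
        simpa [div_eq_mul_inv] using (tendsto_one_div_add_atTop_nhds_zero_nat).const_mul (2*C)
      have hle : |x v| ≤ 0 := ge_of_tendsto' this habs
      exact abs_eq_zero.mp (le_antisymm hle (abs_nonneg _))
    funext v; exact hx0 v
  have htop : LinearMap.ker f ⊔ LinearMap.range f = ⊤ := by
    have h1 := Submodule.finrank_sup_add_finrank_inf_eq (LinearMap.ker f) (LinearMap.range f)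
    rw [hdisj] at h1
    simp only [finrank_bot, add_zero] at h1
    have h2 := LinearMap.finrank_range_add_finrank_ker f
    apply Submodule.eq_top_of_finrank_eq
    rw [h1]; omega
  have hw : w ∈ LinearMap.ker f ⊔ LinearMap.range f := by rw [htop]; trivial
  obtain ⟨g, hg, z, hz, hgz⟩ := Submodule.mem_sup.mp hw
  obtain ⟨b, hb⟩ := hz
  refine ⟨g, b, hker g hg, ?_⟩
  funext v
  rw [← hgz, ← hb]
  simp [hf, Matrix.mulVecLin_apply]


lemma pow_mulVec_ge_of_ge {P : Matrix V V ℝ} (h : RS P) {g : V → ℝ}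
    (hg : ∀ v, g v ≤ P.mulVec g v) : ∀ (t : ℕ) (v : V), g v ≤ (P ^ t).mulVec g v := by
  intro t
  induction t with
  | zero => intro v; simp [Matrix.one_mulVec]
  | succ t ih =>
      intro v
      rw [pow_mulVec_succ]
      calc g v ≤ P.mulVec g v := hg v
        _ ≤ P.mulVec ((P ^ t).mulVec g) v := h.mulVec_mono ih v

lemma le_avg_of_le_pow {P : Matrix V V ℝ} {g : V → ℝ} {w : V}
    (h : ∀ (t : ℕ), g w ≤ (P ^ t).mulVec g w) (T : ℕ) :
    g w ≤ (∑ t ∈ Finset.range (T+1), (P ^ t).mulVec g) w / ((T:ℝ)+1) := by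
  have hT : (0:ℝ) < (T:ℝ)+1 := by positivity
  rw [le_div_iff₀ hT, Finset.sum_apply]
  calc g w * ((T:ℝ)+1) = ∑ _t ∈ Finset.range (T+1), g w := by
        simp [Finset.sum_const, mul_comm]
    _ ≤ ∑ t ∈ Finset.range (T+1), (P ^ t).mulVec g w :=
        Finset.sum_le_sum fun t _ => h t

lemma avg_le_of_pow_le {P : Matrix V V ℝ} {g : V → ℝ} {w : V}
    (h : ∀ (t : ℕ), (P ^ t).mulVec g w ≤ g w) (T : ℕ) :
    (∑ t ∈ Finset.range (T+1), (P ^ t).mulVec g) w / ((T:ℝ)+1) ≤ g w := by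
  have hT : (0:ℝ) < (T:ℝ)+1 := by positivity
  rw [div_le_iff₀ hT, Finset.sum_apply]
  calc ∑ t ∈ Finset.range (T+1), (P ^ t).mulVec g w
      ≤ ∑ _t ∈ Finset.range (T+1), g w := Finset.sum_le_sum fun t _ => h t
    _ = g w * ((T:ℝ)+1) := by simp [Finset.sum_const, mul_comm]

/-- Mean ergodic theorem for a row-stochastic matrix: Birkhoff averages of `w`
converge pointwise to a `P`-harmonic function `g`, with `w - g` in the range of `I - P`. -/
lemma cesaro (P : Matrix V V ℝ) (hP : RS P) (w : V → ℝ) :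
    ∃ g b : V → ℝ, P.mulVec g = g ∧ (w = fun v => g v + (b v - P.mulVec b v)) ∧
      ∀ v, Tendsto (fun T : ℕ => (∑ t ∈ Finset.range (T+1), (P ^ t).mulVec w) v / ((T:ℝ)+1))
        atTop (nhds (g v)) := by
  obtain ⟨g, b, hg, hw⟩ := decomp P hP w
  refine ⟨g, b, hg, hw, fun v => ?_⟩
  obtain ⟨C, hC⟩ := exists_bound b
  have key : ∀ T : ℕ, (∑ t ∈ Finset.range (T+1), (P ^ t).mulVec w) v
      = ((T:ℝ)+1) * g v + (b v - (P ^ (T+1)).mulVec b v) := by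
    intro T
    have h2 : ∀ t : ℕ, (P ^ t).mulVec w v
        = g v + ((P ^ t).mulVec b v - (P ^ (t+1)).mulVec b v) := by
      intro t
      have hw' : w = g + (b - P.mulVec b) := by
        funext u; rw [hw]; simp
      rw [hw', Matrix.mulVec_add, Matrix.mulVec_sub, pow_mulVec_harmonic hg t,
        pow_mulVec_succ' P b t]
      simp
    have h3 : (∑ t ∈ Finset.range (T+1), (P ^ t).mulVec w) v
        = ∑ t ∈ Finset.range (T+1), (P ^ t).mulVec w v := by
      rw [Finset.sum_apply]
    rw [h3, Finset.sum_congr rfl fun t _ => h2 t, Finset.sum_add_distrib]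
    congr 1
    · simp [mul_comm]
    · rw [Finset.sum_range_sub' (fun t => (P ^ t).mulVec b v) (T+1)]
      simp [Matrix.one_mulVec]
  have heq : ∀ T : ℕ, (∑ t ∈ Finset.range (T+1), (P ^ t).mulVec w) v / ((T:ℝ)+1)
      = g v + (b v - (P ^ (T+1)).mulVec b v) / ((T:ℝ)+1) := by
    intro T
    have h1 : ((T:ℝ) + 1) ≠ 0 := by positivity
    rw [key T]; field_simp
  rw [show (fun T : ℕ => (∑ t ∈ Finset.range (T+1), (P ^ t).mulVec w) v / ((T:ℝ)+1))
      = fun T : ℕ => g v + (b v - (P ^ (T+1)).mulVec b v) / ((T:ℝ)+1) from funext heq]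
  have h0 : Tendsto (fun T : ℕ => (b v - (P ^ (T+1)).mulVec b v) / ((T:ℝ)+1)) atTop (nhds 0) := by
    apply tendsto_div_succ_zero (C := 2*C)
    intro T
    calc |b v - (P ^ (T+1)).mulVec b v| ≤ |b v| + |(P ^ (T+1)).mulVec b v| := abs_sub _ _
      _ ≤ C + C := add_le_add (hC v) (abs_pow_mulVec_le hP hC (T+1) v)
      _ = 2*C := by ring
  simpa using (tendsto_const_nhds (x := g v)).add h0


/-- Core analysis of a one-row deviation: if `μ` is `P'`-harmonic off `v` but not at `v`,
and `ρ` agrees off `v` with `μ + (I - P')b`, then the Birkhoff averages of `ρ` and of `μ`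
under `P'` converge to one common `P'`-harmonic limit. -/
lemma deviation_core (P' : Matrix V V ℝ) (hP' : RS P') (μ ρ b : V → ℝ) (v : V)
    (hμharm : ∀ w, w ≠ v → P'.mulVec μ w = μ w)
    (hd : P'.mulVec μ v ≠ μ v)
    (hρ : ∀ w, w ≠ v → ρ w = μ w + (b w - P'.mulVec b w)) :
    ∃ gh : V → ℝ, P'.mulVec gh = gh ∧
      (∀ w, Tendsto (fun T : ℕ => (∑ t ∈ Finset.range (T+1), (P' ^ t).mulVec ρ) w / ((T:ℝ)+1))
        atTop (nhds (gh w))) ∧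
      (∀ w, Tendsto (fun T : ℕ => (∑ t ∈ Finset.range (T+1), (P' ^ t).mulVec μ) w / ((T:ℝ)+1))
        atTop (nhds (gh w))) := by
  classical
  obtain ⟨gh, bh, hghharm, hdecμ, htendμ⟩ := cesaro P' hP' μ
  obtain ⟨ge, be, hgeharm, hdece, htende⟩ := cesaro P' hP' (Pi.single v 1)
  set d : ℝ := P'.mulVec μ v - μ v with hddef
  have hd0 : d ≠ 0 := sub_ne_zero.mpr hd
  have hPμ : P'.mulVec μ = μ + d • (Pi.single v 1 : V → ℝ) := by
    funext w
    by_cases hw : w = v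
    · subst hw; simp [hddef]
    · simp [hμharm w hw, Pi.single_eq_of_ne hw]
  obtain ⟨Cμ, hCμ⟩ := exists_bound μ
  -- key identity : (P'^{T+1}) μ - μ = d • (∑_{t≤T} P'^t e_v)
  have key : ∀ T : ℕ, ∀ w, (P' ^ (T+1)).mulVec μ w - μ w
      = d * (∑ t ∈ Finset.range (T+1), (P' ^ t).mulVec (Pi.single v 1)) w := by
    intro T w
    have h1 : ∀ t : ℕ, (P' ^ (t+1)).mulVec μ
        = (P' ^ t).mulVec μ + d • (P' ^ t).mulVec (Pi.single v 1) := by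
      intro t
      rw [pow_mulVec_succ', hPμ, Matrix.mulVec_add, Matrix.mulVec_smul]
    have h2 : ∑ t ∈ Finset.range (T+1), (P' ^ (t+1)).mulVec μ
        = ∑ t ∈ Finset.range (T+1), (P' ^ t).mulVec μ
          + d • ∑ t ∈ Finset.range (T+1), (P' ^ t).mulVec (Pi.single v 1) := by
      rw [Finset.sum_congr rfl fun t _ => h1 t, Finset.sum_add_distrib, Finset.smul_sum]
    have h3 : ∑ t ∈ Finset.range (T+1), (P' ^ (t+1)).mulVec μ
        = ∑ t ∈ Finset.range (T+1), (P' ^ t).mulVec μ + ((P' ^ (T+1)).mulVec μ - μ) := by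
      have := Finset.sum_range_sub (fun t => (P' ^ t).mulVec μ) (T+1)
      -- ∑_{i<T+1} (f (i+1) - f i) = f (T+1) - f 0
      have h0 : (P' ^ 0).mulVec μ = μ := by simp [Matrix.one_mulVec]
      calc ∑ t ∈ Finset.range (T+1), (P' ^ (t+1)).mulVec μ
          = ∑ t ∈ Finset.range (T+1),
              ((P' ^ t).mulVec μ + ((P' ^ (t+1)).mulVec μ - (P' ^ t).mulVec μ)) := by
            refine Finset.sum_congr rfl fun t _ => ?_; abel
        _ = ∑ t ∈ Finset.range (T+1), (P' ^ t).mulVec μ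
              + ((P' ^ (T+1)).mulVec μ - (P' ^ 0).mulVec μ) := by
            rw [Finset.sum_add_distrib, this]
        _ = ∑ t ∈ Finset.range (T+1), (P' ^ t).mulVec μ + ((P' ^ (T+1)).mulVec μ - μ) := by
            rw [h0]
    have h4 := add_left_cancel (h2.symm.trans h3)
    have h5 := congrFun h4.symm w
    simpa using h5
  -- the limiting visit frequency of v vanishes
  have hge0 : ∀ w, ge w = 0 := by
    intro w
    have h1 : Tendsto (fun T : ℕ =>
        ((P' ^ (T+1)).mulVec μ w - μ w) / ((T:ℝ)+1)) atTop (nhds 0) := by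
      apply tendsto_div_succ_zero (C := 2*Cμ)
      intro T
      calc |(P' ^ (T+1)).mulVec μ w - μ w| ≤ |(P' ^ (T+1)).mulVec μ w| + |μ w| := abs_sub _ _
        _ ≤ Cμ + Cμ := add_le_add (abs_pow_mulVec_le hP' hCμ (T+1) w) (hCμ w)
        _ = 2*Cμ := by ring
    have h2 : Tendsto (fun T : ℕ =>
        ((P' ^ (T+1)).mulVec μ w - μ w) / ((T:ℝ)+1)) atTop (nhds (d * ge w)) := by
      have := (htende w).const_mul d
      apply this.congr
      intro T
      rw [key T w]
      ring
    have := tendsto_nhds_unique h2 h1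
    exact (mul_eq_zero.mp this).resolve_left hd0
  refine ⟨gh, hghharm, fun w => ?_, htendμ⟩
  -- decompose ρ
  set η : ℝ := ρ v - (μ v + (b v - P'.mulVec b v)) with hηdef
  have hρall : ρ = (fun w => μ w + (b w - P'.mulVec b w)) + η • (Pi.single v 1 : V → ℝ) := by
    funext z
    by_cases hz : z = v
    · subst hz; simp [hηdef]
    · simp [hρ z hz, Pi.single_eq_of_ne hz]
  have hsum : ∀ T : ℕ, ∑ t ∈ Finset.range (T+1), (P' ^ t).mulVec ρ
      = ∑ t ∈ Finset.range (T+1), (P' ^ t).mulVec μ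
        + (b - (P' ^ (T+1)).mulVec b)
        + η • ∑ t ∈ Finset.range (T+1), (P' ^ t).mulVec (Pi.single v 1) := by
    intro T
    have h1 : ∀ t : ℕ, (P' ^ t).mulVec ρ
        = (P' ^ t).mulVec μ + ((P' ^ t).mulVec b - (P' ^ (t+1)).mulVec b)
          + η • (P' ^ t).mulVec (Pi.single v 1) := by
      intro t
      have hmid : (fun w => μ w + (b w - P'.mulVec b w)) = μ + (b - P'.mulVec b) := rfl
      rw [hρall, hmid, Matrix.mulVec_add, Matrix.mulVec_add, Matrix.mulVec_sub,
        Matrix.mulVec_smul, pow_mulVec_succ' P' b t]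
    have htel : ∑ t ∈ Finset.range (T+1), ((P' ^ t).mulVec b - (P' ^ (t+1)).mulVec b)
        = b - (P' ^ (T+1)).mulVec b := by
      rw [Finset.sum_range_sub' (fun t => (P' ^ t).mulVec b) (T+1)]
      simp [Matrix.one_mulVec]
    rw [Finset.sum_congr rfl fun t _ => h1 t, Finset.sum_add_distrib, Finset.sum_add_distrib,
      Finset.smul_sum, htel]
  have heq : ∀ T : ℕ, (∑ t ∈ Finset.range (T+1), (P' ^ t).mulVec ρ) w / ((T:ℝ)+1)
      = (∑ t ∈ Finset.range (T+1), (P' ^ t).mulVec μ) w / ((T:ℝ)+1)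
        + (b w - (P' ^ (T+1)).mulVec b w) / ((T:ℝ)+1)
        + η * ((∑ t ∈ Finset.range (T+1), (P' ^ t).mulVec (Pi.single v 1)) w / ((T:ℝ)+1)) := by
    intro T
    have hT1 : ((T:ℝ)+1) ≠ 0 := by positivity
    rw [hsum T]
    simp only [Pi.add_apply, Pi.smul_apply, Pi.sub_apply, smul_eq_mul]
    field_simp
  obtain ⟨Cb, hCb⟩ := exists_bound b
  have h2 : Tendsto (fun T : ℕ => (b w - (P' ^ (T+1)).mulVec b w) / ((T:ℝ)+1)) atTop (nhds 0) := by
    apply tendsto_div_succ_zero (C := 2*Cb)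
    intro T
    calc |b w - (P' ^ (T+1)).mulVec b w| ≤ |b w| + |(P' ^ (T+1)).mulVec b w| := abs_sub _ _
      _ ≤ Cb + Cb := add_le_add (hCb w) (abs_pow_mulVec_le hP' hCb (T+1) w)
      _ = 2*Cb := by ring
  have h3 : Tendsto (fun T : ℕ =>
      η * ((∑ t ∈ Finset.range (T+1), (P' ^ t).mulVec (Pi.single v 1)) w / ((T:ℝ)+1)))
      atTop (nhds 0) := by
    have := (htende w).const_mul η
    rw [hge0 w, mul_zero] at this
    exact this
  have hfin := ((htendμ w).add h2).add h3
  rw [add_zero, add_zero] at hfin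
  exact hfin.congr fun T => (heq T).symm


lemma abs_avg_le {P : Matrix V V ℝ} (h : RS P) {g : V → ℝ} {C : ℝ}
    (hg : ∀ u, |g u| ≤ C) (T : ℕ) (v : V) :
    |(∑ t ∈ Finset.range (T+1), (P ^ t).mulVec g) v / ((T:ℝ)+1)| ≤ C := by
  have hT : (0:ℝ) < (T:ℝ)+1 := by positivity
  rw [abs_div, abs_of_pos hT, div_le_iff₀ hT, Finset.sum_apply]
  calc |∑ t ∈ Finset.range (T+1), (P ^ t).mulVec g v|
      ≤ ∑ t ∈ Finset.range (T+1), |(P ^ t).mulVec g v| :=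
        Finset.abs_sum_le_sum_abs _ _
    _ ≤ ∑ _t ∈ Finset.range (T+1), C :=
        Finset.sum_le_sum fun t _ => abs_pow_mulVec_le h hg t v
    _ = C * ((T:ℝ)+1) := by simp [Finset.sum_const, mul_comm]

lemma liminf_le_of_le_of_ge {f : ℕ → ℝ} {c C : ℝ} (hub : ∀ T, f T ≤ c) (hlb : ∀ T, -C ≤ f T) :
    Filter.liminf f Filter.atTop ≤ c :=
  Filter.liminf_le_of_frequently_le (Filter.Frequently.of_forall hub)
    (Filter.isBoundedUnder_of ⟨-C, fun T => hlb T⟩)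

lemma le_liminf_of_le_of_le {f : ℕ → ℝ} {c C : ℝ} (hlb : ∀ T, c ≤ f T) (hub : ∀ T, f T ≤ C) :
    c ≤ Filter.liminf f Filter.atTop :=
  Filter.le_liminf_of_le ((Filter.isBoundedUnder_of ⟨C, hub⟩).isCoboundedUnder_ge)
    (Filter.Eventually.of_forall hlb)

end ContraAux

section Glue

open ContraAux

variable {V : Type} [Fintype V] [DecidableEq V]

set_option linter.unusedSectionVars false

lemma BWR.rs (G : BWR V) (s : V → V) (hs : G.Valid s) : RS (G.P s) := by
  constructor
  · intro v u
    by_cases hp : G.player v = 2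
    · simp only [BWR.P, Matrix.of_apply, hp, if_true]
      by_cases hu : u ∈ G.succ v
      · exact le_of_lt ((G.p_mem v u hp).mp hu)
      · rw [G.p_zero v u hp hu]
    · simp only [BWR.P, Matrix.of_apply, hp, if_false]
      split <;> norm_num
  · intro v
    by_cases hp : G.player v = 2
    · simp only [BWR.P, Matrix.of_apply, hp, if_true]
      rw [← G.p_sum v hp]
      refine (Finset.sum_subset (Finset.subset_univ _) ?_).symm
      intro u _ hu
      exact G.p_zero v u hp hu
    · simp only [BWR.P, Matrix.of_apply, hp, if_false]
      rw [Finset.sum_ite_eq (Finset.univ) (s v) (fun _ => (1:ℝ))]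
      simp

lemma BWR.P_mulVec_det (G : BWR V) (s : V → V) (v : V) (hp : G.player v ≠ 2) (x : V → ℝ) :
    (G.P s).mulVec x v = x (s v) := by
  have : (G.P s).mulVec x v = ∑ u, (if s v = u then (1:ℝ) else 0) * x u := by
    simp only [Matrix.mulVec, dotProduct, BWR.P, Matrix.of_apply, hp, if_false]
  rw [this]
  rw [Finset.sum_congr rfl (fun u _ => by rw [ite_mul, one_mul, zero_mul])]
  rw [Finset.sum_ite_eq (Finset.univ) (s v) x]
  simp

lemma BWR.P_mulVec_rand (G : BWR V) (s : V → V) (v : V) (hp : G.player v = 2) (x : V → ℝ) :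
    (G.P s).mulVec x v = ∑ u ∈ G.succ v, G.p v u * x u := by
  have : (G.P s).mulVec x v = ∑ u, G.p v u * x u := by
    simp only [Matrix.mulVec, dotProduct, BWR.P, Matrix.of_apply, hp, if_true]
  rw [this]
  refine (Finset.sum_subset (Finset.subset_univ _) ?_).symm
  intro u _ hu
  rw [G.p_zero v u hp hu, zero_mul]


lemma BWR.payoff_eq_of_tendsto (G : BWR V) (s : V → V) {v : V} {L : ℝ}
    (ht : Tendsto (fun T : ℕ =>
      (∑ t ∈ Finset.range (T+1), ((G.P s) ^ t).mulVec (G.rbar s)) v / ((T:ℝ)+1))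
      atTop (nhds L)) : G.payoff s v = L := by
  exact ht.liminf_eq

lemma BWR.row_eq (G : BWR V) (s s' : V → V) (v : V)
    (hrow : ∀ w, w ≠ v → s' w = s w) :
    ∀ w, w ≠ v → ∀ x : V → ℝ, (G.P s').mulVec x w = (G.P s).mulVec x w := by
  intro w hw x
  by_cases hp : G.player w = 2
  · rw [G.P_mulVec_rand s' w hp x, G.P_mulVec_rand s w hp x]
  · rw [G.P_mulVec_det s' w hp x, G.P_mulVec_det s w hp x, hrow w hw]

lemma BWR.rbar_eq_off (G : BWR V) (s s' : V → V) (v : V)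
    (hrow : ∀ w, w ≠ v → s' w = s w) :
    ∀ w, w ≠ v → G.rbar s' w = G.rbar s w := by
  intro w hw
  by_cases hp : G.player w = 2
  · simp only [BWR.rbar, hp, if_true]
  · simp only [BWR.rbar, hp, if_false, hrow w hw]

lemma BWR.deviation_aux (G : BWR V) (s s' : V → V) (v : V) (μ b : V → ℝ)
    (hvalid' : G.Valid s')
    (hrow : ∀ w, w ≠ v → s' w = s w)
    (hdet : G.player v ≠ 2)
    (hμharm : (G.P s).mulVec μ = μ)
    (hdec : G.rbar s = fun w => μ w + (b w - (G.P s).mulVec b w))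
    (hne : μ (s' v) ≠ μ v) :
    ∃ gh : V → ℝ, (∀ w, G.payoff s' w = gh w) ∧ ((G.P s').mulVec gh = gh) ∧
      (∀ w, Tendsto (fun T : ℕ =>
        (∑ t ∈ Finset.range (T+1), ((G.P s') ^ t).mulVec μ) w / ((T:ℝ)+1))
        atTop (nhds (gh w))) := by
  have hRS' := G.rs s' hvalid'
  have hre := G.row_eq s s' v hrow
  have hμharm' : ∀ w, w ≠ v → (G.P s').mulVec μ w = μ w := by
    intro w hw; rw [hre w hw μ, hμharm]
  have hdv : (G.P s').mulVec μ v = μ (s' v) := G.P_mulVec_det s' v hdet μ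
  have hd : (G.P s').mulVec μ v ≠ μ v := by rw [hdv]; exact hne
  have hρ : ∀ w, w ≠ v → G.rbar s' w = μ w + (b w - (G.P s').mulVec b w) := by
    intro w hw
    rw [G.rbar_eq_off s s' v hrow w hw, hre w hw b]
    exact congrFun hdec w
  obtain ⟨gh, hghharm, htendρ, htendμ⟩ :=
    ContraAux.deviation_core (G.P s') hRS' μ (G.rbar s') b v hμharm' hd hρ
  exact ⟨gh, fun w => G.payoff_eq_of_tendsto s' (htendρ w), hghharm, htendμ⟩

/-- The main reverse step: a nonconstant value yields a contra-ergodic partition. -/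
lemma BWR.partition_of_nonconstant (G : BWR V) (μ : V → ℝ) (h : G.IsValue μ)
    (hnc : ¬ ∀ v u : V, μ v = μ u) :
    ∃ Vp Vm : Set V, ContraErgodicPartition G.succ G.player Vp Vm := by
  classical
  obtain ⟨sW, sB, hvalid, hμeq, hWdev, hBdev⟩ := h
  set s := G.combine sW sB with hsdef
  have hRS := G.rs s hvalid
  obtain ⟨g, b, hgharm, hgdec, htend⟩ := ContraAux.cesaro (G.P s) hRS (G.rbar s)
  have hμg : μ = g := by
    funext w
    rw [hμeq w]
    exact G.payoff_eq_of_tendsto s (htend w)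
  rw [← hμg] at hgharm hgdec
  clear htend hμg
  -- step: local optimality at White positions
  have Wstep : ∀ v u, G.player v = 0 → u ∈ G.succ v → μ u ≤ μ v := by
    intro v u hp hu
    by_contra hltc
    push_neg at hltc
    set sW' := Function.update sW v u with hsW'
    set s' := G.combine sW' sB with hs'def
    have hs'v : s' v = u := by
      simp [hs'def, BWR.combine, hp, hsW', Function.update_self]
    have hrow : ∀ w, w ≠ v → s' w = s w := by
      intro w hw
      simp only [hs'def, hsdef, BWR.combine, hsW']
      rw [Function.update_of_ne hw]
    have hvalid' : G.Valid s' := by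
      intro w
      by_cases hw : w = v
      · subst hw; rw [hs'v]; exact hu
      · rw [hrow w hw]; exact hvalid w
    have hdet : G.player v ≠ 2 := by rw [hp]; decide
    have hne : μ (s' v) ≠ μ v := by rw [hs'v]; exact ne_of_gt hltc
    obtain ⟨gh, hpay, hghharm, htendμ⟩ :=
      G.deviation_aux s s' v μ b hvalid' hrow hdet hgharm hgdec hne
    have hle : ∀ w, gh w ≤ μ w := by
      intro w
      rw [← hpay w]
      exact hWdev sW' hvalid' w
    have hge : ∀ w, μ w ≤ gh w := by
      intro w
      have hmono : ∀ z, μ z ≤ (G.P s').mulVec μ z := by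
        intro z
        by_cases hz : z = v
        · subst hz
          rw [G.P_mulVec_det s' z hdet μ, hs'v]
          exact le_of_lt hltc
        · rw [G.row_eq s s' v hrow z hz μ, hgharm]
      have hpow := ContraAux.pow_mulVec_ge_of_ge (G.rs s' hvalid') hmono
      exact ge_of_tendsto' (htendμ w)
        (fun T => ContraAux.le_avg_of_le_pow (fun t => hpow t w) T)
    have heqμ : ∀ w, gh w = μ w := fun w => le_antisymm (hle w) (hge w)
    have hcv : gh (s' v) = gh v := by
      have := congrFun hghharm v
      rw [G.P_mulVec_det s' v hdet gh] at this
      exact this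
    rw [hs'v, heqμ u, heqμ v] at hcv
    exact absurd hcv (ne_of_gt hltc)
  -- step: local optimality at Black positions
  have Bstep : ∀ v u, G.player v = 1 → u ∈ G.succ v → μ v ≤ μ u := by
    intro v u hp hu
    by_contra hltc
    push_neg at hltc
    set sB' := Function.update sB v u with hsB'
    set s' := G.combine sW sB' with hs'def
    have hpv0 : G.player v ≠ 0 := by rw [hp]; decide
    have hs'v : s' v = u := by
      simp [hs'def, BWR.combine, hpv0, hsB', Function.update_self]
    have hrow : ∀ w, w ≠ v → s' w = s w := by
      intro w hw
      simp only [hs'def, hsdef, BWR.combine, hsB']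
      rw [Function.update_of_ne hw]
    have hvalid' : G.Valid s' := by
      intro w
      by_cases hw : w = v
      · subst hw; rw [hs'v]; exact hu
      · rw [hrow w hw]; exact hvalid w
    have hdet : G.player v ≠ 2 := by rw [hp]; decide
    have hne : μ (s' v) ≠ μ v := by rw [hs'v]; exact ne_of_lt hltc
    obtain ⟨gh, hpay, hghharm, htendμ⟩ :=
      G.deviation_aux s s' v μ b hvalid' hrow hdet hgharm hgdec hne
    have hge : ∀ w, μ w ≤ gh w := by
      intro w
      rw [← hpay w]
      exact hBdev sB' hvalid' w
    have hle : ∀ w, gh w ≤ μ w := by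
      intro w
      have hmono : ∀ z, (G.P s').mulVec μ z ≤ μ z := by
        intro z
        by_cases hz : z = v
        · subst hz
          rw [G.P_mulVec_det s' z hdet μ, hs'v]
          exact le_of_lt hltc
        · rw [G.row_eq s s' v hrow z hz μ, hgharm]
      have hpow := ContraAux.pow_mulVec_le_of_le (G.rs s' hvalid') hmono
      exact le_of_tendsto' (htendμ w)
        (fun T => ContraAux.avg_le_of_pow_le (fun t => hpow t w) T)
    have heqμ : ∀ w, gh w = μ w := fun w => le_antisymm (hle w) (hge w)
    have hcv : gh (s' v) = gh v := by
      have := congrFun hghharm v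
      rw [G.P_mulVec_det s' v hdet gh] at this
      exact this
    rw [hs'v, heqμ u, heqμ v] at hcv
    exact absurd hcv (ne_of_lt hltc)
  -- harmonicity consequences for the saddle situation
  have hdetmove : ∀ v, G.player v ≠ 2 → μ (s v) = μ v := by
    intro v hv
    have := congrFun hgharm v
    rw [G.P_mulVec_det s v hv μ] at this
    exact this
  have hrand : ∀ v, G.player v = 2 → ∑ u ∈ G.succ v, G.p v u * μ u = μ v := by
    intro v hv
    have := congrFun hgharm v
    rw [G.P_mulVec_rand s v hv μ] at this
    exact this
  -- extreme values
  have hVne : Nonempty V := by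
    by_contra hemp
    exact hnc fun v u => absurd (Nonempty.intro v) hemp
  obtain ⟨vmax, -, hvmax⟩ := Finset.exists_max_image (Finset.univ : Finset V) μ
    (Finset.univ_nonempty)
  obtain ⟨vmin, -, hvmin⟩ := Finset.exists_min_image (Finset.univ : Finset V) μ
    (Finset.univ_nonempty)
  have hvmax' : ∀ w, μ w ≤ μ vmax := fun w => hvmax w (Finset.mem_univ w)
  have hvmin' : ∀ w, μ vmin ≤ μ w := fun w => hvmin w (Finset.mem_univ w)
  have hMm : μ vmin ≠ μ vmax := by
    intro hMeq
    apply hnc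
    intro v u
    have h1 : μ v = μ vmax := le_antisymm (hvmax' v) (hMeq ▸ hvmin' v)
    have h2 : μ u = μ vmax := le_antisymm (hvmax' u) (hMeq ▸ hvmin' u)
    rw [h1, h2]
  -- the random-vertex lemma
  have hrand_eq : ∀ v, G.player v = 2 → ∀ u ∈ G.succ v, ∀ c : ℝ,
      μ v = c → (∀ w, c ≤ μ w) → μ u = c := by
    intro v hv u hu c hc hcle
    have hsum := hrand v hv
    have hzero : ∑ u ∈ G.succ v, G.p v u * (μ u - c) = 0 := by
      have hps := G.p_sum v hv
      have : ∑ u ∈ G.succ v, G.p v u * (μ u - c)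
          = (∑ u ∈ G.succ v, G.p v u * μ u) - (∑ u ∈ G.succ v, G.p v u) * c := by
        rw [Finset.sum_mul, ← Finset.sum_sub_distrib]
        exact Finset.sum_congr rfl fun u _ => by ring
      rw [this, hsum, hps, one_mul, hc, sub_self]
    have hnn : ∀ x ∈ G.succ v, 0 ≤ G.p v x * (μ x - c) := by
      intro x hx
      have hp0 : 0 < G.p v x := (G.p_mem v x hv).mp hx
      have : 0 ≤ μ x - c := sub_nonneg.mpr (hcle x)
      positivity
    have hterm : ∀ x ∈ G.succ v, G.p v x * (μ x - c) = 0 :=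
      (Finset.sum_eq_zero_iff_of_nonneg hnn).mp hzero
    have := hterm u hu
    rcases mul_eq_zero.mp this with h0 | h0
    · exact absurd h0 (ne_of_gt ((G.p_mem v u hv).mp hu))
    · linarith [sub_eq_zero.mp h0]
  have hrand_eq' : ∀ v, G.player v = 2 → ∀ u ∈ G.succ v, ∀ c : ℝ,
      μ v = c → (∀ w, μ w ≤ c) → μ u = c := by
    intro v hv u hu c hc hcle
    have hsum := hrand v hv
    have hzero : ∑ u ∈ G.succ v, G.p v u * (c - μ u) = 0 := by
      have hps := G.p_sum v hv
      have : ∑ u ∈ G.succ v, G.p v u * (c - μ u)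
          = (∑ u ∈ G.succ v, G.p v u) * c - (∑ u ∈ G.succ v, G.p v u * μ u) := by
        rw [Finset.sum_mul, ← Finset.sum_sub_distrib]
        exact Finset.sum_congr rfl fun u _ => by ring
      rw [this, hsum, hps, one_mul, hc, sub_self]
    have hnn : ∀ x ∈ G.succ v, 0 ≤ G.p v x * (c - μ x) := by
      intro x hx
      have hp0 : 0 < G.p v x := (G.p_mem v x hv).mp hx
      have : 0 ≤ c - μ x := sub_nonneg.mpr (hcle x)
      positivity
    have hterm : ∀ x ∈ G.succ v, G.p v x * (c - μ x) = 0 :=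
      (Finset.sum_eq_zero_iff_of_nonneg hnn).mp hzero
    have := hterm u hu
    rcases mul_eq_zero.mp this with h0 | h0
    · exact absurd h0 (ne_of_gt ((G.p_mem v u hv).mp hu))
    · linarith [sub_eq_zero.mp h0]
  -- assemble the partition
  refine ⟨{w | μ w = μ vmax}, {w | μ w = μ vmin}, ⟨vmax, rfl⟩, ⟨vmin, rfl⟩, ?_, ?_, ?_, ?_, ?_⟩
  · rw [Set.disjoint_left]
    intro w hw1 hw2
    exact hMm (hw2.symm.trans hw1)
  · -- White and Random cannot leave V⁻
    intro v hv hp u hu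
    rcases hp with hp | hp
    · have h1 := Wstep v u hp hu
      have h2 := hvmin' u
      simp only [Set.mem_setOf_eq] at hv ⊢
      rw [hv] at h1
      exact le_antisymm h1 h2
    · exact hrand_eq v hp u hu (μ vmin) hv hvmin'
  · -- Black and Random cannot leave V⁺
    intro v hv hp u hu
    rcases hp with hp | hp
    · have h1 := Bstep v u hp hu
      have h2 := hvmax' u
      simp only [Set.mem_setOf_eq] at hv ⊢
      rw [hv] at h1
      exact le_antisymm h2 h1
    · exact hrand_eq' v hp u hu (μ vmax) hv hvmax'
  · -- White has an arc staying in V⁺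
    intro v hv hp
    have hdet : G.player v ≠ 2 := by rw [hp]; decide
    refine ⟨s v, hvalid v, ?_⟩
    simp only [Set.mem_setOf_eq] at hv ⊢
    rw [hdetmove v hdet, hv]
  · -- Black has an arc staying in V⁻
    intro v hv hp
    have hdet : G.player v ≠ 2 := by rw [hp]; decide
    refine ⟨s v, hvalid v, ?_⟩
    simp only [Set.mem_setOf_eq] at hv ⊢
    rw [hdetmove v hdet, hv]

section Forward

variable {V : Type} [Fintype V] [DecidableEq V]

set_option linter.unusedSectionVars false

lemma fin3_eq_two (x : Fin 3) (h0 : x ≠ 0) (h1 : x ≠ 1) : x = 2 := by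
  fin_cases x <;> simp_all

variable (succ : V → Finset V) (hne : ∀ v, (succ v).Nonempty) (player : V → Fin 3)
  (Vp Vm : Set V)

open Classical in
/-- The one-step "local value" operator, frozen at `±1` on the two parts. -/
noncomputable def Fop (g : V → ℝ) : V → ℝ := fun v =>
  if v ∈ Vp then 1 else if v ∈ Vm then -1 else
  if player v = 0 then (succ v).sup' (hne v) g
  else if player v = 1 then (succ v).inf' (hne v) g
  else (∑ u ∈ succ v, g u) / (succ v).card

lemma Fop_mono {g g' : V → ℝ} (h : ∀ w, g w ≤ g' w) :
    ∀ v, Fop succ hne player Vp Vm g v ≤ Fop succ hne player Vp Vm g' v := by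
  intro v
  unfold Fop
  split
  · exact le_refl _
  split
  · exact le_refl _
  split
  · refine Finset.sup'_le _ _ fun u hu => le_trans (h u) (Finset.le_sup' g' hu)
  split
  · refine Finset.le_inf' _ _ fun u hu => le_trans (Finset.inf'_le g hu) (h u)
  · have hc : (0:ℝ) < (succ v).card := by
      have := (hne v).card_pos
      exact_mod_cast this
    have hsum := Finset.sum_le_sum (f := g) (g := g') (s := succ v) fun u _ => h u
    gcongr

lemma Fop_bounds {g : V → ℝ} (h : ∀ w, |g w| ≤ 1) :
    ∀ v, |Fop succ hne player Vp Vm g v| ≤ 1 := by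
  intro v
  have h1 : ∀ w, -1 ≤ g w := fun w => (abs_le.mp (h w)).1
  have h2 : ∀ w, g w ≤ 1 := fun w => (abs_le.mp (h w)).2
  rw [abs_le]
  unfold Fop
  split
  · norm_num
  split
  · norm_num
  have hc : (0:ℝ) < (succ v).card := by
    have := (hne v).card_pos
    exact_mod_cast this
  split
  · constructor
    · obtain ⟨u, hu⟩ := hne v
      exact le_trans (h1 u) (Finset.le_sup' g hu)
    · exact Finset.sup'_le _ _ fun u _ => h2 u
  split
  · constructor
    · exact Finset.le_inf' _ _ fun u _ => h1 u
    · obtain ⟨u, hu⟩ := hne v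
      exact le_trans (Finset.inf'_le g hu) (h2 u)
  · constructor
    · rw [le_div_iff₀ hc]
      calc (-1 : ℝ) * (succ v).card = ∑ _u ∈ succ v, (-1 : ℝ) := by
            simp [Finset.sum_const, mul_comm]
        _ ≤ ∑ u ∈ succ v, g u := Finset.sum_le_sum fun u _ => h1 u
    · rw [div_le_iff₀ hc]
      calc ∑ u ∈ succ v, g u ≤ ∑ _u ∈ succ v, (1:ℝ) := Finset.sum_le_sum fun u _ => h2 u
        _ = 1 * (succ v).card := by simp [Finset.sum_const, mul_comm]

/-- The set of bounded pre-fixpoints. -/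
def PFset : Set (V → ℝ) :=
  {g | (∀ w, |g w| ≤ 1) ∧ ∀ w, g w ≤ Fop succ hne player Vp Vm g w}

lemma PFset_nonempty : (fun _ : V => (-1 : ℝ)) ∈ PFset succ hne player Vp Vm := by
  constructor
  · intro w; norm_num
  · intro w
    unfold Fop
    split
    · norm_num
    split
    · norm_num
    have hc : (0:ℝ) < (succ w).card := by
      have := (hne w).card_pos
      exact_mod_cast this
    split
    · obtain ⟨u, hu⟩ := hne w
      exact Finset.le_sup' (fun _ : V => (-1:ℝ)) hu
    split
    · exact Finset.le_inf' _ _ fun u _ => le_refl _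
    · rw [le_div_iff₀ hc]
      simp [Finset.sum_const, mul_comm]

/-- The largest bounded pre-fixpoint: a Tarski-style fixpoint of `Fop`. -/
noncomputable def gstar : V → ℝ := fun v =>
  sSup {x : ℝ | ∃ g ∈ PFset succ hne player Vp Vm, g v = x}


lemma gstar_bddAbove (v : V) :
    BddAbove {x : ℝ | ∃ g ∈ PFset succ hne player Vp Vm, g v = x} := by
  refine ⟨1, fun x hx => ?_⟩
  obtain ⟨g, hg, rfl⟩ := hx
  exact (abs_le.mp (hg.1 v)).2

lemma gstar_set_nonempty (v : V) :
    {x : ℝ | ∃ g ∈ PFset succ hne player Vp Vm, g v = x}.Nonempty :=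
  ⟨-1, (fun _ : V => (-1:ℝ)), PFset_nonempty succ hne player Vp Vm, rfl⟩

lemma le_gstar {g : V → ℝ} (hg : g ∈ PFset succ hne player Vp Vm) (v : V) :
    g v ≤ gstar succ hne player Vp Vm v :=
  le_csSup (gstar_bddAbove succ hne player Vp Vm v) ⟨g, hg, rfl⟩

lemma gstar_le_one (v : V) : gstar succ hne player Vp Vm v ≤ 1 :=
  csSup_le (gstar_set_nonempty succ hne player Vp Vm v)
    (fun x hx => by obtain ⟨g, hg, rfl⟩ := hx; exact (abs_le.mp (hg.1 v)).2)

lemma neg_one_le_gstar (v : V) : -1 ≤ gstar succ hne player Vp Vm v :=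
  le_gstar succ hne player Vp Vm (PFset_nonempty succ hne player Vp Vm) v

lemma gstar_abs (v : V) : |gstar succ hne player Vp Vm v| ≤ 1 :=
  abs_le.mpr ⟨neg_one_le_gstar succ hne player Vp Vm v, gstar_le_one succ hne player Vp Vm v⟩

lemma gstar_le_Fop (v : V) : gstar succ hne player Vp Vm v
    ≤ Fop succ hne player Vp Vm (gstar succ hne player Vp Vm) v := by
  refine csSup_le (gstar_set_nonempty succ hne player Vp Vm v) ?_
  rintro x ⟨g, hg, rfl⟩
  calc g v ≤ Fop succ hne player Vp Vm g v := hg.2 v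
    _ ≤ Fop succ hne player Vp Vm (gstar succ hne player Vp Vm) v :=
      Fop_mono succ hne player Vp Vm (le_gstar succ hne player Vp Vm hg) v

lemma gstar_fixed : Fop succ hne player Vp Vm (gstar succ hne player Vp Vm)
    = gstar succ hne player Vp Vm := by
  have hmem : Fop succ hne player Vp Vm (gstar succ hne player Vp Vm)
      ∈ PFset succ hne player Vp Vm := by
    constructor
    · exact Fop_bounds succ hne player Vp Vm (gstar_abs succ hne player Vp Vm)
    · exact fun w => Fop_mono succ hne player Vp Vm
        (gstar_le_Fop succ hne player Vp Vm) w
  funext v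
  exact le_antisymm (le_gstar succ hne player Vp Vm hmem v)
    (gstar_le_Fop succ hne player Vp Vm v)


lemma gstar_Vp {v : V} (hv : v ∈ Vp) : gstar succ hne player Vp Vm v = 1 := by
  conv_lhs => rw [← gstar_fixed succ hne player Vp Vm]
  unfold Fop
  rw [if_pos hv]

lemma gstar_Vm (hCEP : ContraErgodicPartition succ player Vp Vm) {v : V} (hv : v ∈ Vm) : gstar succ hne player Vp Vm v = -1 := by
  have hnp : v ∉ Vp := fun hvp => (Set.disjoint_left.mp hCEP.2.2.1) hvp hv
  conv_lhs => rw [← gstar_fixed succ hne player Vp Vm]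
  unfold Fop
  rw [if_neg hnp, if_pos hv]

lemma gstar_C {v : V} (hp : v ∉ Vp) (hm : v ∉ Vm) :
    gstar succ hne player Vp Vm v = (if player v = 0 then
      (succ v).sup' (hne v) (gstar succ hne player Vp Vm)
    else if player v = 1 then (succ v).inf' (hne v) (gstar succ hne player Vp Vm)
    else (∑ u ∈ succ v, gstar succ hne player Vp Vm u) / (succ v).card) := by
  conv_lhs => rw [← gstar_fixed succ hne player Vp Vm]
  unfold Fop
  rw [if_neg hp, if_neg hm]

lemma Ksup (hCEP : ContraErgodicPartition succ player Vp Vm) : ∀ v, player v = 0 →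
    (succ v).sup' (hne v) (gstar succ hne player Vp Vm) = gstar succ hne player Vp Vm v := by
  intro v hpv
  by_cases hp : v ∈ Vp
  · rw [gstar_Vp succ hne player Vp Vm hp]
    refine le_antisymm (Finset.sup'_le _ _ fun u _ => gstar_le_one succ hne player Vp Vm u) ?_
    obtain ⟨u, hu, hup⟩ := hCEP.2.2.2.2.2.1 v hp hpv
    calc (1:ℝ) = gstar succ hne player Vp Vm u := (gstar_Vp succ hne player Vp Vm hup).symm
      _ ≤ _ := Finset.le_sup' _ hu
  by_cases hm : v ∈ Vm
  · rw [gstar_Vm succ hne player Vp Vm hCEP hm]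
    have hall : ∀ u ∈ succ v, gstar succ hne player Vp Vm u = -1 := fun u hu =>
      gstar_Vm succ hne player Vp Vm hCEP (hCEP.2.2.2.1 v hm (Or.inl hpv) u hu)
    refine le_antisymm (Finset.sup'_le _ _ fun u hu => le_of_eq (hall u hu)) ?_
    obtain ⟨u, hu⟩ := hne v
    calc (-1:ℝ) = gstar succ hne player Vp Vm u := (hall u hu).symm
      _ ≤ _ := Finset.le_sup' _ hu
  · rw [gstar_C succ hne player Vp Vm hp hm, if_pos hpv]

lemma Kinf (hCEP : ContraErgodicPartition succ player Vp Vm) : ∀ v, player v = 1 →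
    (succ v).inf' (hne v) (gstar succ hne player Vp Vm) = gstar succ hne player Vp Vm v := by
  intro v hpv
  have hpv0 : player v ≠ 0 := by rw [hpv]; decide
  by_cases hp : v ∈ Vp
  · rw [gstar_Vp succ hne player Vp Vm hp]
    have hall : ∀ u ∈ succ v, gstar succ hne player Vp Vm u = 1 := fun u hu =>
      gstar_Vp succ hne player Vp Vm (hCEP.2.2.2.2.1 v hp (Or.inl hpv) u hu)
    refine le_antisymm ?_ (Finset.le_inf' _ _ fun u hu => ge_of_eq (hall u hu))
    obtain ⟨u, hu⟩ := hne v
    calc _ ≤ gstar succ hne player Vp Vm u := Finset.inf'_le _ hu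
      _ = (1:ℝ) := hall u hu
  by_cases hm : v ∈ Vm
  · rw [gstar_Vm succ hne player Vp Vm hCEP hm]
    refine le_antisymm ?_ (Finset.le_inf' _ _ fun u _ => neg_one_le_gstar succ hne player Vp Vm u)
    obtain ⟨u, hu, hup⟩ := hCEP.2.2.2.2.2.2 v hm hpv
    calc _ ≤ gstar succ hne player Vp Vm u := Finset.inf'_le _ hu
      _ = (-1:ℝ) := gstar_Vm succ hne player Vp Vm hCEP hup
  · rw [gstar_C succ hne player Vp Vm hp hm, if_neg hpv0, if_pos hpv]

lemma Kmean (hCEP : ContraErgodicPartition succ player Vp Vm) : ∀ v, player v = 2 →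
    (∑ u ∈ succ v, gstar succ hne player Vp Vm u) / (succ v).card
      = gstar succ hne player Vp Vm v := by
  intro v hpv
  have hpv0 : player v ≠ 0 := by rw [hpv]; decide
  have hpv1 : player v ≠ 1 := by rw [hpv]; decide
  have hc : ((succ v).card : ℝ) ≠ 0 := by
    have := (hne v).card_pos
    positivity
  by_cases hp : v ∈ Vp
  · rw [gstar_Vp succ hne player Vp Vm hp]
    have hall : ∀ u ∈ succ v, gstar succ hne player Vp Vm u = 1 := fun u hu =>
      gstar_Vp succ hne player Vp Vm (hCEP.2.2.2.2.1 v hp (Or.inr hpv) u hu)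
    rw [Finset.sum_congr rfl hall]
    rw [Finset.sum_const, nsmul_eq_mul, mul_one, div_self hc]
  by_cases hm : v ∈ Vm
  · rw [gstar_Vm succ hne player Vp Vm hCEP hm]
    have hall : ∀ u ∈ succ v, gstar succ hne player Vp Vm u = -1 := fun u hu =>
      gstar_Vm succ hne player Vp Vm hCEP (hCEP.2.2.2.1 v hm (Or.inr hpv) u hu)
    rw [Finset.sum_congr rfl hall]
    rw [Finset.sum_const, nsmul_eq_mul, mul_neg_one, neg_div, div_self hc]
  · rw [gstar_C succ hne player Vp Vm hp hm, if_neg hpv0, if_neg hpv1]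


open ContraAux in
/-- The explicit game witnessing non-ergodicity from a contra-ergodic partition. -/
noncomputable def Gex : BWR V where
  succ := succ
  succ_nonempty := hne
  player := player
  p := fun v u => if u ∈ succ v then ((succ v).card : ℝ)⁻¹ else 0
  p_mem := by
    intro v u _
    show u ∈ succ v ↔ 0 < if u ∈ succ v then ((succ v).card : ℝ)⁻¹ else 0
    constructor
    · intro hu
      rw [if_pos hu]
      have := (hne v).card_pos
      positivity
    · intro h
      by_contra hu
      rw [if_neg hu] at h
      exact lt_irrefl 0 h
  p_zero := by
    intro v u _ hu
    show (if u ∈ succ v then ((succ v).card : ℝ)⁻¹ else 0) = 0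
    exact if_neg hu
  p_sum := by
    intro v _
    show ∑ u ∈ succ v, (if u ∈ succ v then ((succ v).card : ℝ)⁻¹ else 0) = 1
    rw [Finset.sum_congr rfl (fun u hu => if_pos hu), Finset.sum_const, nsmul_eq_mul]
    have hc : ((succ v).card : ℝ) ≠ 0 := by
      have := (hne v).card_pos
      positivity
    field_simp
  r := fun v _ => gstar succ hne player Vp Vm v

noncomputable def sWex : V → V := fun v =>
  (Finset.exists_mem_eq_sup' (hne v) (gstar succ hne player Vp Vm)).choose

lemma sWex_spec (v : V) : sWex succ hne player Vp Vm v ∈ succ v ∧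
    (succ v).sup' (hne v) (gstar succ hne player Vp Vm)
      = gstar succ hne player Vp Vm (sWex succ hne player Vp Vm v) :=
  (Finset.exists_mem_eq_sup' (hne v) (gstar succ hne player Vp Vm)).choose_spec

noncomputable def sBex : V → V := fun v =>
  (Finset.exists_mem_eq_inf' (hne v) (gstar succ hne player Vp Vm)).choose

lemma sBex_spec (v : V) : sBex succ hne player Vp Vm v ∈ succ v ∧
    (succ v).inf' (hne v) (gstar succ hne player Vp Vm)
      = gstar succ hne player Vp Vm (sBex succ hne player Vp Vm v) :=
  (Finset.exists_mem_eq_inf' (hne v) (gstar succ hne player Vp Vm)).choose_spec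

include hne in
open ContraAux in
lemma forward_main (hCEP : ContraErgodicPartition succ player Vp Vm) :
    ∃ G : BWR V, G.succ = succ ∧ G.player = player ∧
      ∃ μ : V → ℝ, G.IsValue μ ∧ ∃ a b : V, μ a ≠ μ b := by
  classical
  set g : V → ℝ := gstar succ hne player Vp Vm with hgdef
  set G : BWR V := Gex succ hne player Vp Vm with hGdef
  have hGsucc : G.succ = succ := rfl
  have hGplayer : G.player = player := rfl
  set sW : V → V := sWex succ hne player Vp Vm with hsWdef
  set sB : V → V := sBex succ hne player Vp Vm with hsBdef
  set s : V → V := G.combine sW sB with hsdef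
  -- rewards are source-based, so `rbar` is `g` for every situation
  have hrbar : ∀ s' : V → V, G.rbar s' = g := by
    intro s'
    funext v
    unfold BWR.rbar
    by_cases hp : G.player v = 2
    · rw [if_pos hp]
      show ∑ u ∈ succ v, (if u ∈ succ v then ((succ v).card : ℝ)⁻¹ else 0) * g v = g v
      rw [Finset.sum_congr rfl (fun u hu => by rw [if_pos hu])]
      rw [Finset.sum_const, nsmul_eq_mul]
      have hc : ((succ v).card : ℝ) ≠ 0 := by
        have := (hne v).card_pos
        positivity
      field_simp
    · rw [if_neg hp]
      rfl
  have hKsup : ∀ v, player v = 0 → (succ v).sup' (hne v) g = g v :=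
    fun v hv => Ksup succ hne player Vp Vm hCEP v hv
  have hKinf : ∀ v, player v = 1 → (succ v).inf' (hne v) g = g v :=
    fun v hv => Kinf succ hne player Vp Vm hCEP v hv
  have hKmean : ∀ v, player v = 2 → (∑ u ∈ succ v, g u) / ((succ v).card : ℝ) = g v :=
    fun v hv => Kmean succ hne player Vp Vm hCEP v hv
  have hsWspec : ∀ v, sW v ∈ succ v ∧ (succ v).sup' (hne v) g = g (sW v) :=
    fun v => sWex_spec succ hne player Vp Vm v
  have hsBspec : ∀ v, sB v ∈ succ v ∧ (succ v).inf' (hne v) g = g (sB v) :=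
    fun v => sBex_spec succ hne player Vp Vm v
  have habsg : ∀ v, |g v| ≤ 1 := fun v => gstar_abs succ hne player Vp Vm v
  -- the random rows preserve `g`
  have hPrand : ∀ (s' : V → V) (v : V), G.player v = 2 → (G.P s').mulVec g v = g v := by
    intro s' v hp
    rw [G.P_mulVec_rand s' v hp g]
    show ∑ u ∈ succ v, (if u ∈ succ v then ((succ v).card : ℝ)⁻¹ else 0) * g u = g v
    rw [Finset.sum_congr rfl (fun u hu => by rw [if_pos hu])]
    rw [← hKmean v hp]
    rw [Finset.sum_congr rfl (fun u _ => by rw [inv_mul_eq_div]), ← Finset.sum_div]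
  -- the saddle-point situation is harmonic
  have hsW : ∀ v, G.player v = 0 → s v = sW v := by
    intro v hp
    simp [hsdef, BWR.combine, hp]
  have hsB : ∀ v, G.player v ≠ 0 → s v = sB v := by
    intro v hp
    simp [hsdef, BWR.combine, hp]
  have hvalid : G.Valid s := by
    intro v
    by_cases hp : G.player v = 0
    · rw [hsW v hp]
      exact (sWex_spec succ hne player Vp Vm v).1
    · rw [hsB v hp]
      exact (sBex_spec succ hne player Vp Vm v).1
  have hPg : (G.P s).mulVec g = g := by
    funext v
    by_cases hp0 : G.player v = 0
    · rw [G.P_mulVec_det s v (by rw [hp0]; decide) g, hsW v hp0]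
      rw [← (hsWspec v).2]
      exact hKsup v hp0
    by_cases hp1 : G.player v = 1
    · rw [G.P_mulVec_det s v (by rw [hp1]; decide) g, hsB v (by rw [hp1]; decide)]
      rw [← (hsBspec v).2]
      exact hKinf v hp1
    · exact hPrand s v (fin3_eq_two _ hp0 hp1)
  have hRS : RS (G.P s) := G.rs s hvalid
  -- the payoff of the saddle point is `g`
  have hpayoff : ∀ v, G.payoff s v = g v := by
    intro v
    have hfun : (fun T : ℕ =>
        (∑ t ∈ Finset.range (T+1), ((G.P s) ^ t).mulVec (G.rbar s)) v / ((T:ℝ)+1))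
        = fun _ : ℕ => g v := by
      funext T
      rw [hrbar s]
      rw [Finset.sum_apply]
      rw [Finset.sum_congr rfl (fun t _ => by rw [pow_mulVec_harmonic hPg t])]
      rw [Finset.sum_const, nsmul_eq_mul]
      have hT : ((T:ℝ)+1) ≠ 0 := by positivity
      field_simp
      rw [Finset.card_range]; push_cast; ring
    show Filter.liminf _ Filter.atTop = g v
    rw [hfun]
    exact Filter.liminf_const _
  -- White deviations
  have hWdev : ∀ sW' : V → V, G.Valid (G.combine sW' sB) →
      ∀ v, G.payoff (G.combine sW' sB) v ≤ g v := by
    intro sW' hval' v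
    set s' : V → V := G.combine sW' sB with hs'def
    have hle : ∀ z, (G.P s').mulVec g z ≤ g z := by
      intro z
      by_cases hp0 : G.player z = 0
      · rw [G.P_mulVec_det s' z (by rw [hp0]; decide) g]
        have hs'z : s' z = sW' z := by simp [hs'def, BWR.combine, hp0]
        have hmem : sW' z ∈ succ z := by
          have := hval' z
          rw [hs'z] at this
          exact this
        rw [hs'z]
        calc g (sW' z) ≤ (succ z).sup' (hne z) g := Finset.le_sup' g hmem
          _ = g z := hKsup z hp0
      by_cases hp1 : G.player z = 1
      · rw [G.P_mulVec_det s' z (by rw [hp1]; decide) g]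
        have hs'z : s' z = sB z := by simp [hs'def, BWR.combine, hp1]
        rw [hs'z, ← (hsBspec z).2]
        exact le_of_eq (hKinf z hp1)
      · exact le_of_eq (hPrand s' z (fin3_eq_two _ hp0 hp1))
    have hRS' : RS (G.P s') := G.rs s' hval'
    have hpow := pow_mulVec_le_of_le hRS' hle
    apply liminf_le_of_le_of_ge (C := 1)
    · intro T
      rw [hrbar s']
      exact avg_le_of_pow_le (fun t => hpow t v) T
    · intro T
      rw [hrbar s']
      exact (abs_le.mp (abs_avg_le hRS' habsg T v)).1
  -- Black deviations
  have hBdev : ∀ sB' : V → V, G.Valid (G.combine sW sB') →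
      ∀ v, g v ≤ G.payoff (G.combine sW sB') v := by
    intro sB' hval' v
    set s' : V → V := G.combine sW sB' with hs'def
    have hge : ∀ z, g z ≤ (G.P s').mulVec g z := by
      intro z
      by_cases hp0 : G.player z = 0
      · rw [G.P_mulVec_det s' z (by rw [hp0]; decide) g]
        have hs'z : s' z = sW z := by simp [hs'def, BWR.combine, hp0]
        rw [hs'z, ← (hsWspec z).2]
        exact ge_of_eq (hKsup z hp0)
      by_cases hp1 : G.player z = 1
      · rw [G.P_mulVec_det s' z (by rw [hp1]; decide) g]
        have hs'z : s' z = sB' z := by simp [hs'def, BWR.combine, hp0, hp1]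
        have hmem : sB' z ∈ succ z := by
          have := hval' z
          rw [hs'z] at this
          exact this
        rw [hs'z]
        calc g z = (succ z).inf' (hne z) g := (hKinf z hp1).symm
          _ ≤ g (sB' z) := Finset.inf'_le g hmem
      · exact ge_of_eq (hPrand s' z (fin3_eq_two _ hp0 hp1))
    have hRS' : RS (G.P s') := G.rs s' hval'
    have hpow := pow_mulVec_ge_of_ge hRS' hge
    apply le_liminf_of_le_of_le (C := 1)
    · intro T
      rw [hrbar s']
      exact le_avg_of_le_pow (fun t => hpow t v) T
    · intro T
      rw [hrbar s']
      exact (abs_le.mp (abs_avg_le hRS' habsg T v)).2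
  refine ⟨G, hGsucc, hGplayer, g, ⟨sW, sB, hvalid, fun v => (hpayoff v).symm, hWdev, hBdev⟩, ?_⟩
  obtain ⟨vp, hvp⟩ := hCEP.1
  obtain ⟨vm, hvm⟩ := hCEP.2.1
  refine ⟨vp, vm, ?_⟩
  rw [hgdef, gstar_Vp succ hne player Vp Vm hvp, gstar_Vm succ hne player Vp Vm hCEP hvm]
  norm_num

end Forward

/-- A digraph (with no sinks) is ergodic — i.e. every BWR-game on it
has a position-independent value — if and only if it admits no contra-ergodic
partition. -/
theorem digraph_ergodic_iff_no_contra_ergodic_partition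
    {V : Type} [Fintype V] [DecidableEq V]
    (succ : V → Finset V) (hne : ∀ v, (succ v).Nonempty) (player : V → Fin 3) :
    (∀ G : BWR V, G.succ = succ → G.player = player →
        ∀ μ : V → ℝ, G.IsValue μ → ∀ v u : V, μ v = μ u) ↔
      ¬ ∃ Vp Vm : Set V, ContraErgodicPartition succ player Vp Vm := by
  constructor
  · intro hErg hex
    obtain ⟨Vp, Vm, hCEP⟩ := hex
    obtain ⟨G, hGsucc, hGplayer, μ, hval, a, b, hab⟩ :=
      forward_main succ hne player Vp Vm hCEP
    exact hab (hErg G hGsucc hGplayer μ hval a b)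
  · intro hno G hsucc hplayer μ hval v u
    by_contra hne'
    have hnc : ¬ ∀ a b : V, μ a = μ b := fun hall => hne' (hall v u)
    obtain ⟨Vp, Vm, hCEP⟩ := G.partition_of_nonconstant μ hval hnc
    rw [hsucc, hplayer] at hCEP
    exact hno ⟨Vp, Vm, hCEP⟩
end Glue
end

section
/- Let Ĝ(x) be a parametrized BW-game containing a distinguished position w with a self-loop of reward x (all other rewards fixed integers). For a fixed position v, define f(x) = μ_{Ĝ(x)}(v), the optimal mean-payoff value of v as a function of x. If f(x) < x for some x, then f(y) = f(x) for all y ≥ f(x). If f(x) > x, then f(y) = f(x) for all y ≤ f(x). If f(x) = x, then for y > x we have x ≤ f(y) ≤ y, and for y < x we have y ≤ f(y) ≤ x. -/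
open Matrix Filter
open scoped Topology

namespace BWR

variable {V : Type} [Fintype V] [DecidableEq V] (G : BWR V)

lemma mulVec_pow_apply (hdet : ∀ u, G.player u ≠ 2) (s : V → V)
    (g : V → ℝ) : ∀ (t : ℕ) (v : V), ((G.P s) ^ t).mulVec g v = g (s^[t] v) := by
  have hstep : ∀ (h : V → ℝ) (u : V), (G.P s).mulVec h u = h (s u) := by
    intro h u
    simp only [Matrix.mulVec, dotProduct, P, Matrix.of_apply, if_neg (hdet u), ite_mul,
      one_mul, zero_mul]
    simp [Finset.sum_ite_eq]
  intro t
  induction t with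
  | zero => intro v; simp [Matrix.one_mulVec]
  | succ t ih =>
    intro v
    rw [pow_succ', ← Matrix.mulVec_mulVec, hstep, ih (s v), ← Function.iterate_succ_apply]

lemma payoff_formula (hdet : ∀ u, G.player u ≠ 2) (s : V → V) (v : V) :
    G.payoff s v = Filter.liminf (fun T : ℕ =>
      (∑ t ∈ Finset.range (T + 1), G.r (s^[t] v) (s^[t+1] v)) / (T + 1)) Filter.atTop := by
  unfold payoff
  congr 1
  funext T
  congr 1
  rw [Finset.sum_apply]
  refine Finset.sum_congr rfl fun t _ => ?_
  rw [G.mulVec_pow_apply hdet, rbar, if_neg (hdet _), Function.iterate_succ_apply']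

lemma payoff_hit (hdet : ∀ u, G.player u ≠ 2) (s : V → V) (v w : V)
    (hsw : s w = w) (N : ℕ) (hN : s^[N] v = w) : G.payoff s v = G.r w w := by
  rw [G.payoff_formula hdet]
  have hiter : ∀ t, N ≤ t → s^[t] v = w := by
    intro t ht
    have h1 : s^[t] v = s^[t - N] (s^[N] v) := by
      rw [← Function.iterate_add_apply, Nat.sub_add_cancel ht]
    rw [h1, hN, Function.iterate_fixed hsw]
  set ρ : ℕ → ℝ := fun t => G.r (s^[t] v) (s^[t+1] v) with hρ
  have h1 : Filter.Tendsto ρ atTop (𝓝 (G.r w w)) := by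
    refine tendsto_const_nhds.congr' ?_
    filter_upwards [Filter.eventually_ge_atTop N] with t ht
    simp only [hρ]
    rw [hiter t ht, hiter (t+1) (le_trans ht (Nat.le_succ t))]
  have h3 := h1.cesaro.comp (Filter.tendsto_add_atTop_nat 1)
  have h4 : Filter.Tendsto (fun T : ℕ =>
      (∑ t ∈ Finset.range (T + 1), ρ t) / (T + 1)) atTop (𝓝 (G.r w w)) := by
    refine h3.congr fun T => ?_
    simp only [Function.comp_apply, div_eq_inv_mul]
    push_cast
    ring_nf
  exact h4.liminf_eq

lemma payoff_nohit (G' : BWR V) (hdet : ∀ u, G.player u ≠ 2) (hdet' : ∀ u, G'.player u ≠ 2)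
    (w : V) (hrr : ∀ u u', u ≠ w → G.r u u' = G'.r u u')
    (s : V → V) (v : V) (hno : ∀ t, s^[t] v ≠ w) :
    G.payoff s v = G'.payoff s v := by
  rw [G.payoff_formula hdet, G'.payoff_formula hdet']
  congr 1
  funext T
  congr 1
  exact Finset.sum_congr rfl fun t _ => hrr _ _ (hno t)


end BWR

/-- Monotonicity structure of the value of a position `v` of a
parametrized BW-game `Ĝ(x)` (a deterministic mean-payoff game with a
distinguished position `w` whose self-loop reward is the parameter `x`), as a
function `f(x) = μ_{Ĝ(x)}(v)` of the parameter. -/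
theorem parametrized_BW_value_monotonicity
    {V : Type} [Fintype V] [DecidableEq V]
    (G : ℝ → BWR V) (w : V)
    -- the underlying graph, partition and probabilities do not depend on x
    (hsucc : ∀ x y, (G x).succ = (G y).succ)
    (hplayer : ∀ x y, (G x).player = (G y).player)
    -- BW-game: no random positions
    (hdet : ∀ x v, (G x).player v ≠ 2)
    -- w carries a self-loop with reward x; all other rewards are fixed
    (hw : ∀ x, (G x).succ w = {w})
    (hwr : ∀ x, (G x).r w w = x)
    (hr : ∀ x y v u, ¬(v = w ∧ u = w) → (G x).r v u = (G y).r v u)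
    (μ : ℝ → V → ℝ) (hμ : ∀ x, (G x).IsValue (μ x))
    (v : V) (f : ℝ → ℝ) (hf : ∀ x, f x = μ x v) (x : ℝ) :
    (f x < x → ∀ y, f x ≤ y → f y = f x) ∧
    (f x > x → ∀ y, y ≤ f x → f y = f x) ∧
    (f x = x → ∀ y, x < y → x ≤ f y ∧ f y ≤ y) ∧
    (f x = x → ∀ y, y < x → y ≤ f y ∧ f y ≤ x) := by
  classical
  choose sW sB hValid hEq hWdev hBdev using hμ
  have hcomb : ∀ a b : ℝ, ∀ s1 s2 : V → V, (G a).combine s1 s2 = (G b).combine s1 s2 := by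
    intro a b s1 s2
    funext u
    unfold BWR.combine
    rw [hplayer a b]
  have hsw : ∀ a : ℝ, ∀ s : V → V, (G a).Valid s → s w = w := by
    intro a s hs
    have h1 := hs w
    rw [hw a, Finset.mem_singleton] at h1
    exact h1
  -- validity of cross-combined situations, in every game
  have hVC : ∀ a b t : ℝ, (G t).Valid ((G t).combine (sW a) (sB b)) := by
    intro a b t u
    unfold BWR.combine
    by_cases h0 : (G t).player u = 0
    · rw [if_pos h0]
      have h1 := hValid a u
      unfold BWR.combine at h1
      rw [hplayer a t, if_pos h0] at h1
      rw [hsucc t a]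
      exact h1
    · rw [if_neg h0]
      have h1 := hValid b u
      unfold BWR.combine at h1
      rw [hplayer b t, if_neg h0] at h1
      rw [hsucc t b]
      exact h1
  -- payoff dichotomy
  have key : ∀ a b : ℝ, ∀ s : V → V, (G a).Valid s →
      ((G a).payoff s v = a ∧ (G b).payoff s v = b) ∨
      ((G a).payoff s v = (G b).payoff s v) := by
    intro a b s hs
    by_cases hhit : ∃ N, s^[N] v = w
    · obtain ⟨N, hN⟩ := hhit
      left
      refine ⟨?_, ?_⟩
      · rw [(G a).payoff_hit (hdet a) s v w (hsw a s hs) N hN, hwr a]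
      · rw [(G b).payoff_hit (hdet b) s v w (hsw a s hs) N hN, hwr b]
    · right
      push_neg at hhit
      exact (G a).payoff_nohit (G b) (hdet a) (hdet b) w
        (fun u u' hu => hr a b u u' (fun h => hu h.1)) s v hhit
  -- the four monotonicity lemmas
  have L1 : ∀ a b : ℝ, f a ≤ b → f a ≤ f b := by
    intro a b hab
    set s : V → V := (G a).combine (sW a) (sB b) with hsdef
    have h1 : f a ≤ (G a).payoff s v := by
      rw [hf a]; exact hBdev a (sB b) (hVC a b a) v
    have h2 : (G b).payoff s v ≤ f b := by
      rw [hf b]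
      have h3 := hWdev b (sW a) (hVC a b b) v
      rwa [hcomb b a] at h3
    rcases key a b s (hVC a b a) with ⟨_, hb⟩ | heq
    · calc f a ≤ b := hab
        _ = (G b).payoff s v := hb.symm
        _ ≤ f b := h2
    · calc f a ≤ (G a).payoff s v := h1
        _ = (G b).payoff s v := heq
        _ ≤ f b := h2
  have L2 : ∀ a b : ℝ, b ≤ f a → f b ≤ f a := by
    intro a b hab
    set s : V → V := (G b).combine (sW b) (sB a) with hsdef
    have h1 : f b ≤ (G b).payoff s v := by
      rw [hf b]; exact hBdev b (sB a) (hVC b a b) v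
    have h2 : (G a).payoff s v ≤ f a := by
      rw [hf a]
      have h3 := hWdev a (sW b) (hVC b a a) v
      rwa [hcomb a b] at h3
    rcases key b a s (hVC b a b) with ⟨hb, _⟩ | heq
    · calc f b ≤ (G b).payoff s v := h1
        _ = b := hb
        _ ≤ f a := hab
    · calc f b ≤ (G b).payoff s v := h1
        _ = (G a).payoff s v := heq
        _ ≤ f a := h2
  have L3 : ∀ a : ℝ, f a < a → ∀ b : ℝ, f b ≤ f a := by
    intro a ha b
    set s : V → V := (G a).combine (sW b) (sB a) with hsdef
    have h1 : f b ≤ (G b).payoff s v := by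
      rw [hf b]
      have h3 := hBdev b (sB a) (hVC b a b) v
      rwa [hcomb b a] at h3
    have h2 : (G a).payoff s v ≤ f a := by
      rw [hf a]; exact hWdev a (sW b) (hVC b a a) v
    rcases key a b s (hVC b a a) with ⟨haa, _⟩ | heq
    · linarith
    · calc f b ≤ (G b).payoff s v := h1
        _ = (G a).payoff s v := heq.symm
        _ ≤ f a := h2
  have L4 : ∀ a : ℝ, a < f a → ∀ b : ℝ, f a ≤ f b := by
    intro a ha b
    set s : V → V := (G a).combine (sW a) (sB b) with hsdef
    have h1 : f a ≤ (G a).payoff s v := by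
      rw [hf a]; exact hBdev a (sB b) (hVC a b a) v
    have h2 : (G b).payoff s v ≤ f b := by
      rw [hf b]
      have h3 := hWdev b (sW a) (hVC a b b) v
      rwa [hcomb b a] at h3
    rcases key a b s (hVC a b a) with ⟨haa, _⟩ | heq
    · linarith
    · calc f a ≤ (G a).payoff s v := h1
        _ = (G b).payoff s v := heq
        _ ≤ f b := h2
  refine ⟨?_, ?_, ?_, ?_⟩
  · intro hlt y hy
    exact le_antisymm (L3 x hlt y) (L1 x y hy)
  · intro hgt y hy
    exact le_antisymm (L2 x y hy) (L4 x hgt y)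
  · intro hfx y hxy
    constructor
    · have := L1 x y (by linarith)
      linarith
    · by_contra hcon
      push_neg at hcon
      have := L4 y hcon x
      linarith
  · intro hfx y hxy
    constructor
    · by_contra hcon
      push_neg at hcon
      have := L3 y hcon x
      linarith
    · have := L2 x y (by linarith)
      linarith
end

section
/- For a parametrized BWR-game G(x) (with a distinguished deterministic position w carrying a self-loop of reward x, reachable with positive probability from every random position), the set I(G(x)) = { x ∈ [−R, R] : G(x) is ergodic } is a (possibly empty) closed subinterval of [−R, R]. -/
open Matrix Filter

/-- A BWR-game is ergodic if its value function is constant. -/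
def BWR.Ergodic {V : Type} [Fintype V] [DecidableEq V] (G : BWR V) : Prop :=
  ∃ μ : V → ℝ, G.IsValue μ ∧ ∀ v u : V, μ v = μ u

namespace BWRAux

set_option linter.unusedSectionVars false

variable {V : Type} [Fintype V] [DecidableEq V]

lemma P_apply (G : BWR V) (s : V → V) (v u : V) :
    G.P s v u = if G.player v = 2 then G.p v u else if s v = u then 1 else 0 := rfl

lemma P_nonneg (G : BWR V) (s : V → V) (v u : V) : 0 ≤ G.P s v u := by
  rw [P_apply]
  split_ifs with h1 h2
  · by_cases hm : u ∈ G.succ v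
    · exact ((G.p_mem v u h1).1 hm).le
    · exact (G.p_zero v u h1 hm).ge
  · exact zero_le_one
  · exact le_refl 0

lemma P_row_sum (G : BWR V) (s : V → V) (v : V) : ∑ u, G.P s v u = 1 := by
  by_cases h : G.player v = 2
  · simp only [P_apply, h, if_true]
    rw [show (∑ u, G.p v u) = ∑ u ∈ G.succ v, G.p v u from
      (Finset.sum_subset (Finset.subset_univ _) (fun u _ hu => G.p_zero v u h hu)).symm]
    exact G.p_sum v h
  · simp only [P_apply, h, if_false]
    simp

lemma Ppow_nonneg (G : BWR V) (s : V → V) : ∀ (t : ℕ) (v u : V), 0 ≤ (G.P s ^ t) v u := by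
  intro t
  induction t with
  | zero =>
    intro v u
    rw [pow_zero, Matrix.one_apply]
    split_ifs <;> norm_num
  | succ t ih =>
    intro v u
    rw [pow_succ, Matrix.mul_apply]
    exact Finset.sum_nonneg fun k _ => mul_nonneg (ih v k) (P_nonneg G s k u)

lemma Ppow_row_sum (G : BWR V) (s : V → V) : ∀ (t : ℕ) (v : V), ∑ u, (G.P s ^ t) v u = 1 := by
  intro t
  induction t with
  | zero => intro v; simp [Matrix.one_apply]
  | succ t ih =>
    intro v
    simp only [pow_succ, Matrix.mul_apply]
    rw [Finset.sum_comm]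
    calc ∑ k, ∑ u, (G.P s ^ t) v k * G.P s k u
        = ∑ k, (G.P s ^ t) v k * ∑ u, G.P s k u := by
          exact Finset.sum_congr rfl fun k _ => (Finset.mul_sum _ _ _).symm
      _ = 1 := by
          simp only [P_row_sum, mul_one]
          exact ih v

lemma Ppow_le_one (G : BWR V) (s : V → V) (t : ℕ) (v u : V) : (G.P s ^ t) v u ≤ 1 := by
  calc (G.P s ^ t) v u ≤ ∑ u', (G.P s ^ t) v u' :=
        Finset.single_le_sum (fun u' _ => Ppow_nonneg G s t v u') (Finset.mem_univ u)
    _ = 1 := Ppow_row_sum G s t v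

lemma mulVec_apply' (M : Matrix V V ℝ) (f : V → ℝ) (v : V) :
    (M.mulVec f) v = ∑ u, M v u * f u := rfl

lemma mulVec_abs_le (G : BWR V) (s : V → V) (t : ℕ) (f : V → ℝ) (B : ℝ)
    (hf : ∀ u, |f u| ≤ B) (v : V) : |((G.P s ^ t).mulVec f) v| ≤ B := by
  calc |((G.P s ^ t).mulVec f) v| = |∑ u, (G.P s ^ t) v u * f u| := by rw [mulVec_apply']
    _ ≤ ∑ u, |(G.P s ^ t) v u * f u| := Finset.abs_sum_le_sum_abs _ _
    _ ≤ ∑ u, (G.P s ^ t) v u * B := by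
        refine Finset.sum_le_sum fun u _ => ?_
        rw [abs_mul, abs_of_nonneg (Ppow_nonneg G s t v u)]
        exact mul_le_mul_of_nonneg_left (hf u) (Ppow_nonneg G s t v u)
    _ = B := by rw [← Finset.sum_mul, Ppow_row_sum, one_mul]

lemma payoff_at_w (G : BWR V) (s : V → V) (w : V) (hdet : G.player w ≠ 2) (hs : s w = w) :
    G.payoff s w = G.r w w := by
  have hrow : ∀ f : V → ℝ, ((G.P s).mulVec f) w = f w := by
    intro f
    calc ((G.P s).mulVec f) w = ∑ u, G.P s w u * f u := rfl
      _ = ∑ u, (if s w = u then 1 else 0) * f u := by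
          refine Finset.sum_congr rfl fun u _ => ?_
          rw [P_apply, if_neg hdet]
      _ = f (s w) := by simp
      _ = f w := by rw [hs]
  have key : ∀ t : ℕ, ((G.P s ^ t).mulVec (G.rbar s)) w = G.r w w := by
    intro t
    induction t with
    | zero =>
      rw [pow_zero, Matrix.one_mulVec]
      show (if G.player w = 2 then _ else G.r w (s w)) = G.r w w
      rw [if_neg hdet, hs]
    | succ t ih =>
      rw [pow_succ', ← Matrix.mulVec_mulVec, hrow, ih]
  have hsum : ∀ T : ℕ,
      (∑ t ∈ Finset.range (T + 1), (G.P s ^ t).mulVec (G.rbar s)) w / (T + 1) = G.r w w := by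
    intro T
    rw [Finset.sum_apply]
    simp only [key]
    rw [Finset.sum_const, Finset.card_range, nsmul_eq_mul]
    have hT : ((T : ℝ) + 1) ≠ 0 := by positivity
    push_cast
    field_simp
  unfold BWR.payoff
  simp only [hsum]
  exact Filter.liminf_const _

lemma liminf_sandwich {A B : ℕ → ℝ} {c K : ℝ}
    (h1 : ∀ T, A T ≤ B T) (h2 : ∀ T, B T ≤ A T + c)
    (hA : ∀ T, |A T| ≤ K) (hB : ∀ T, |B T| ≤ K) :
    Filter.liminf A Filter.atTop ≤ Filter.liminf B Filter.atTop ∧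
      Filter.liminf B Filter.atTop ≤ Filter.liminf A Filter.atTop + c := by
  have hAlo : Filter.IsBoundedUnder (· ≥ ·) Filter.atTop A :=
    Filter.isBoundedUnder_of ⟨-K, fun T => neg_le_of_abs_le (hA T)⟩
  have hAhi : Filter.IsBoundedUnder (· ≤ ·) Filter.atTop A :=
    Filter.isBoundedUnder_of ⟨K, fun T => le_of_abs_le (hA T)⟩
  have hBlo : Filter.IsBoundedUnder (· ≥ ·) Filter.atTop B :=
    Filter.isBoundedUnder_of ⟨-K, fun T => neg_le_of_abs_le (hB T)⟩
  have hBhi : Filter.IsBoundedUnder (· ≤ ·) Filter.atTop B :=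
    Filter.isBoundedUnder_of ⟨K, fun T => le_of_abs_le (hB T)⟩
  have hAchi : Filter.IsBoundedUnder (· ≤ ·) Filter.atTop (fun T => A T + c) :=
    Filter.isBoundedUnder_of ⟨K + c, fun T => add_le_add_left (le_of_abs_le (hA T)) c⟩
  constructor
  · exact Filter.liminf_le_liminf (Filter.Eventually.of_forall h1) hAlo
      hBhi.isCoboundedUnder_ge
  · have step : Filter.liminf B Filter.atTop ≤ Filter.liminf (fun T => A T + c) Filter.atTop :=
      Filter.liminf_le_liminf (Filter.Eventually.of_forall h2) hBlo
        hAchi.isCoboundedUnder_ge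
    rwa [liminf_add_const Filter.atTop A c hAhi.isCoboundedUnder_ge hAlo] at step

lemma payoff_sandwich (G1 G2 : BWR V) (s : V → V) (w : V) (c : ℝ) (hc : 0 ≤ c)
    (hP : G1.P s = G2.P s)
    (hrb : ∀ v, G2.rbar s v = G1.rbar s v + (if v = w then c else 0)) (v : V) :
    G1.payoff s v ≤ G2.payoff s v ∧ G2.payoff s v ≤ G1.payoff s v + c := by
  have hterm : ∀ t, ((G1.P s ^ t).mulVec (G2.rbar s)) v
      = ((G1.P s ^ t).mulVec (G1.rbar s)) v + (G1.P s ^ t) v w * c := by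
    intro t
    rw [mulVec_apply', mulVec_apply']
    calc ∑ u, (G1.P s ^ t) v u * G2.rbar s u
        = ∑ u, ((G1.P s ^ t) v u * G1.rbar s u
            + (G1.P s ^ t) v u * (if u = w then c else 0)) := by
          refine Finset.sum_congr rfl fun u _ => ?_
          rw [hrb u, mul_add]
      _ = (∑ u, (G1.P s ^ t) v u * G1.rbar s u)
            + ∑ u, (G1.P s ^ t) v u * (if u = w then c else 0) := Finset.sum_add_distrib
      _ = (∑ u, (G1.P s ^ t) v u * G1.rbar s u) + (G1.P s ^ t) v w * c := by
          congr 1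
          simp [mul_ite]
  have hterm_ge : ∀ t, ((G1.P s ^ t).mulVec (G1.rbar s)) v
      ≤ ((G1.P s ^ t).mulVec (G2.rbar s)) v := by
    intro t
    rw [hterm t]
    nlinarith [Ppow_nonneg G1 s t v w]
  have hterm_le : ∀ t, ((G1.P s ^ t).mulVec (G2.rbar s)) v
      ≤ ((G1.P s ^ t).mulVec (G1.rbar s)) v + c := by
    intro t
    rw [hterm t]
    have h1 := Ppow_le_one G1 s t v w
    have h2 := Ppow_nonneg G1 s t v w
    nlinarith
  set K1 : ℝ := ∑ u, |G1.rbar s u| with hK1def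
  set K2 : ℝ := ∑ u, |G2.rbar s u| with hK2def
  have hK1 : ∀ u, |G1.rbar s u| ≤ K1 := by
    intro u; rw [hK1def]
    exact Finset.single_le_sum (f := fun x => |G1.rbar s x|) (fun _ _ => abs_nonneg _)
      (Finset.mem_univ u)
  have hK2 : ∀ u, |G2.rbar s u| ≤ K2 := by
    intro u; rw [hK2def]
    exact Finset.single_le_sum (f := fun x => |G2.rbar s x|) (fun _ _ => abs_nonneg _)
      (Finset.mem_univ u)
  have hK1n : 0 ≤ K1 := by
    rw [hK1def]; exact Finset.sum_nonneg (f := fun x => |G1.rbar s x|) fun _ _ => abs_nonneg _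
  have hK2n : 0 ≤ K2 := by
    rw [hK2def]; exact Finset.sum_nonneg (f := fun x => |G2.rbar s x|) fun _ _ => abs_nonneg _
  set K := K1 + K2 with hKdef
  have habs : ∀ (Gi : BWR V), (∀ u, |Gi.rbar s u| ≤ K) → ∀ T : ℕ,
      |(∑ t ∈ Finset.range (T + 1), (G1.P s ^ t).mulVec (Gi.rbar s)) v / ((T:ℝ) + 1)| ≤ K := by
    intro Gi hGi T
    have hT : (0:ℝ) < (T:ℝ) + 1 := by positivity
    rw [abs_div, abs_of_pos hT, div_le_iff₀ hT]
    calc |(∑ t ∈ Finset.range (T + 1), (G1.P s ^ t).mulVec (Gi.rbar s)) v|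
        = |∑ t ∈ Finset.range (T + 1), ((G1.P s ^ t).mulVec (Gi.rbar s)) v| := by
          rw [Finset.sum_apply]
      _ ≤ ∑ t ∈ Finset.range (T + 1), |((G1.P s ^ t).mulVec (Gi.rbar s)) v| :=
          Finset.abs_sum_le_sum_abs _ _
      _ ≤ ∑ t ∈ Finset.range (T + 1), K := by
          refine Finset.sum_le_sum fun t _ => ?_
          exact mulVec_abs_le G1 s t (Gi.rbar s) K hGi v
      _ = K * ((T:ℝ) + 1) := by
          rw [Finset.sum_const, Finset.card_range, nsmul_eq_mul]
          push_cast; ring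
  have habsA := habs G1 (fun u => (hK1 u).trans (by rw [hKdef]; linarith))
  have habsB := habs G2 (fun u => (hK2 u).trans (by rw [hKdef]; linarith))
  have h1 : ∀ T : ℕ,
      (∑ t ∈ Finset.range (T + 1), (G1.P s ^ t).mulVec (G1.rbar s)) v / ((T:ℝ) + 1)
      ≤ (∑ t ∈ Finset.range (T + 1), (G1.P s ^ t).mulVec (G2.rbar s)) v / ((T:ℝ) + 1) := by
    intro T
    have hT : (0:ℝ) < (T:ℝ) + 1 := by positivity
    rw [div_le_div_iff_of_pos_right hT, Finset.sum_apply, Finset.sum_apply]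
    exact Finset.sum_le_sum fun t _ => hterm_ge t
  have h2 : ∀ T : ℕ,
      (∑ t ∈ Finset.range (T + 1), (G1.P s ^ t).mulVec (G2.rbar s)) v / ((T:ℝ) + 1)
      ≤ (∑ t ∈ Finset.range (T + 1), (G1.P s ^ t).mulVec (G1.rbar s)) v / ((T:ℝ) + 1) + c := by
    intro T
    have hT : (0:ℝ) < (T:ℝ) + 1 := by positivity
    rw [div_add' _ _ _ (ne_of_gt hT), div_le_div_iff_of_pos_right hT, Finset.sum_apply,
      Finset.sum_apply]
    calc ∑ t ∈ Finset.range (T + 1), ((G1.P s ^ t).mulVec (G2.rbar s)) v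
        ≤ ∑ t ∈ Finset.range (T + 1), (((G1.P s ^ t).mulVec (G1.rbar s)) v + c) :=
          Finset.sum_le_sum fun t _ => hterm_le t
      _ = (∑ t ∈ Finset.range (T + 1), ((G1.P s ^ t).mulVec (G1.rbar s)) v) + c * ((T:ℝ) + 1) := by
          rw [Finset.sum_add_distrib, Finset.sum_const, Finset.card_range, nsmul_eq_mul]
          push_cast; ring
  show G1.payoff s v ≤ G2.payoff s v ∧ G2.payoff s v ≤ G1.payoff s v + c
  simp only [BWR.payoff, ← hP]
  exact liminf_sandwich h1 h2 habsA habsB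

end BWRAux


/-- For a parametrized BWR-game `G(x)` (distinguished
deterministic position `w` with a self-loop of reward `x`, reachable with
positive probability from every random position; all other rewards bounded by
`R`), the set `{x ∈ [−R,R] : G(x) is ergodic}` is a (possibly empty) closed
subinterval of `[−R,R]`. -/
theorem parametrized_BWR_ergodicity_interval
    {V : Type} [Fintype V] [DecidableEq V]
    (G : ℝ → BWR V) (w : V) (R : ℝ)
    (hsucc : ∀ x y, (G x).succ = (G y).succ)
    (hplayer : ∀ x y, (G x).player = (G y).player)
    (hp : ∀ x y, (G x).p = (G y).p)
    -- w is deterministic and carries only a self-loop of reward x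
    (hwdet : ∀ x, (G x).player w ≠ 2)
    (hw : ∀ x, (G x).succ w = {w})
    (hwr : ∀ x, (G x).r w w = x)
    (hr : ∀ x y v u, ¬(v = w ∧ u = w) → (G x).r v u = (G y).r v u)
    -- w is reachable (in one step, with positive probability) from every random position
    (hreach : ∀ x v, (G x).player v = 2 → w ∈ (G x).succ v)
    -- all non-parameter rewards lie in [−R, R]
    (hbound : ∀ x v u, u ∈ (G x).succ v → ¬(v = w ∧ u = w) → |(G x).r v u| ≤ R) :
    ∃ a b : ℝ, {x ∈ Set.Icc (-R) R | (G x).Ergodic} = Set.Icc a b := by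
  classical
  have hPeq : ∀ (x y : ℝ) (s : V → V), (G x).P s = (G y).P s := by
    intro x y s
    ext v u
    rw [BWRAux.P_apply, BWRAux.P_apply, hplayer x y, hp x y]
  have hValid_tr : ∀ (x y : ℝ) (s : V → V), (G x).Valid s → (G y).Valid s := by
    intro x y s h v
    rw [hsucc y x]
    exact h v
  have hCombEq : ∀ (x y : ℝ) (sW sB : V → V), (G x).combine sW sB = (G y).combine sW sB := by
    intro x y sW sB
    funext v
    show (if (G x).player v = 0 then sW v else sB v) = (if (G y).player v = 0 then sW v else sB v)
    rw [hplayer x y]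
  have hsw : ∀ (x : ℝ) (s : V → V), (G x).Valid s → s w = w := by
    intro x s h
    have hm := h w
    rw [hw x] at hm
    exact Finset.mem_singleton.1 hm
  have hrbar : ∀ (x y : ℝ) (s : V → V), s w = w →
      ∀ v, (G y).rbar s v = (G x).rbar s v + (if v = w then y - x else 0) := by
    intro x y s hs v
    simp only [BWR.rbar]
    by_cases hvw : v = w
    · subst hvw
      rw [if_neg (hwdet y), if_neg (hwdet x), if_pos rfl, hs, hwr, hwr]
      ring
    · rw [if_neg hvw, add_zero]
      by_cases h2 : (G y).player v = 2
      · have h2x : (G x).player v = 2 := by rw [hplayer x y]; exact h2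
        rw [if_pos h2, if_pos h2x, hsucc y x, hp y x]
        exact Finset.sum_congr rfl fun u _ => by
          rw [hr y x v u (fun hc => hvw hc.1)]
      · have h2x : ¬ (G x).player v = 2 := by rw [hplayer x y]; exact h2
        rw [if_neg h2, if_neg h2x, hr y x v (s v) (fun hc => hvw hc.1)]
  have hcomp : ∀ (x y : ℝ), x ≤ y → ∀ (s : V → V), s w = w → ∀ v,
      (G x).payoff s v ≤ (G y).payoff s v ∧ (G y).payoff s v ≤ (G x).payoff s v + (y - x) :=
    fun x y hxy s hs v =>
      BWRAux.payoff_sandwich (G x) (G y) s w (y - x) (sub_nonneg.2 hxy) (hPeq x y s)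
        (hrbar x y s hs) v
  have hpayoff_w : ∀ (x : ℝ) (s : V → V), s w = w → (G x).payoff s w = x := by
    intro x s hs
    rw [BWRAux.payoff_at_w (G x) s w (hwdet x) hs, hwr]
  have hergval : ∀ (x : ℝ) (μ : V → ℝ), (G x).IsValue μ → (∀ v u, μ v = μ u) →
      ∀ v, μ v = x := by
    intro x μ hval hconst v
    obtain ⟨sW, sB, hvd, hμ, -, -⟩ := hval
    rw [hconst v w, hμ w, hpayoff_w x _ (hsw x _ hvd)]
  -- the set is order-connected
  have hord : ∀ x y z : ℝ, x ∈ {x ∈ Set.Icc (-R) R | (G x).Ergodic} →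
      z ∈ {x ∈ Set.Icc (-R) R | (G x).Ergodic} → x ≤ y → y ≤ z →
      y ∈ {x ∈ Set.Icc (-R) R | (G x).Ergodic} := by
    intro x y z hx hz hxy hyz
    obtain ⟨hxI, μx, hvx, hcx⟩ := hx
    obtain ⟨hzI, μz, hvz, hcz⟩ := hz
    have hμxval := hergval x μx hvx hcx
    have hμzval := hergval z μz hvz hcz
    obtain ⟨sWx, sBx, hvdx, hμx2, hWx, hBx⟩ := hvx
    obtain ⟨sWz, sBz, hvdz, hμz2, hWz, hBz⟩ := hvz
    have hvalid1 : (G y).Valid ((G y).combine sWz sBx) := by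
      intro v
      show (if (G y).player v = 0 then sWz v else sBx v) ∈ (G y).succ v
      by_cases h0 : (G y).player v = 0
      · rw [if_pos h0]
        have hz0 : (G z).player v = 0 := by rw [hplayer z y]; exact h0
        have hm := hvdz v
        rw [show (G z).combine sWz sBz v = sWz v from if_pos hz0] at hm
        rw [hsucc y z]; exact hm
      · rw [if_neg h0]
        have hx0 : ¬ (G x).player v = 0 := by rw [hplayer x y]; exact h0
        have hm := hvdx v
        rw [show (G x).combine sWx sBx v = sBx v from if_neg hx0] at hm
        rw [hsucc y x]; exact hm
    have hs1w : ((G y).combine sWz sBx) w = w := hsw y _ hvalid1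
    have hvx1 : (G x).Valid ((G x).combine sWz sBx) := by
      rw [hCombEq x y]; exact hValid_tr y x _ hvalid1
    have hx_le : ∀ v, (G x).payoff ((G y).combine sWz sBx) v ≤ x := by
      intro v
      have h := hWx sWz hvx1 v
      rw [hμxval v] at h
      rwa [hCombEq x y] at h
    have hvz1 : (G z).Valid ((G z).combine sWz sBx) := by
      rw [hCombEq z y]; exact hValid_tr y z _ hvalid1
    have hz_ge : ∀ v, z ≤ (G z).payoff ((G y).combine sWz sBx) v := by
      intro v
      have h := hBz sBx hvz1 v
      rw [hμzval v] at h
      rwa [hCombEq z y] at h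
    have hy_eq : ∀ v, (G y).payoff ((G y).combine sWz sBx) v = y := by
      intro v
      have h1 := (hcomp x y hxy _ hs1w v).2
      have h2 := (hcomp y z hyz _ hs1w v).2
      have h3 := hx_le v
      have h4 := hz_ge v
      linarith
    refine ⟨⟨le_trans hxI.1 hxy, le_trans hyz hzI.2⟩, fun _ => y,
      ⟨sWz, sBx, hvalid1, fun v => (hy_eq v).symm, ?_, ?_⟩, fun _ _ => rfl⟩
    · intro sW' hval' v
      have hsw' := hsw y _ hval'
      have hvx' : (G x).Valid ((G x).combine sW' sBx) := by
        rw [hCombEq x y]; exact hValid_tr y x _ hval'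
      have h := hWx sW' hvx' v
      rw [hμxval v, hCombEq x y] at h
      have h2 := (hcomp x y hxy _ hsw' v).2
      linarith
    · intro sB' hval' v
      have hsw' := hsw y _ hval'
      have hvz' : (G z).Valid ((G z).combine sWz sB') := by
        rw [hCombEq z y]; exact hValid_tr y z _ hval'
      have h := hBz sB' hvz' v
      rw [hμzval v, hCombEq z y] at h
      have h2 := (hcomp y z hyz _ hsw' v).2
      linarith
  -- payoff is continuous in the parameter
  have hcont : ∀ (s : V → V), s w = w → ∀ v, Continuous (fun x : ℝ => (G x).payoff s v) := by
    intro s hs v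
    have hlip : LipschitzWith 1 (fun x : ℝ => (G x).payoff s v) := by
      apply LipschitzWith.of_dist_le_mul
      intro x y
      rw [NNReal.coe_one, one_mul, Real.dist_eq, Real.dist_eq]
      rcases le_total x y with h | h
      · have h1 := (hcomp x y h s hs v).1
        have h2 := (hcomp x y h s hs v).2
        have hxy : |x - y| = y - x := by rw [abs_sub_comm, abs_of_nonneg (sub_nonneg.2 h)]
        rw [hxy, abs_le]; constructor <;> linarith
      · have h1 := (hcomp y x h s hs v).1
        have h2 := (hcomp y x h s hs v).2
        have hxy : |x - y| = x - y := abs_of_nonneg (sub_nonneg.2 h)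
        rw [hxy, abs_le]; constructor <;> linarith
    exact hlip.continuous
  -- the set is closed
  have hclosed : IsClosed {x ∈ Set.Icc (-R) R | (G x).Ergodic} := by
    have hdecomp : {x ∈ Set.Icc (-R) R | (G x).Ergodic}
        = ⋃ q : (V → V) × (V → V),
            {x : ℝ | x ∈ Set.Icc (-R) R ∧ (G x).Valid ((G x).combine q.1 q.2)
              ∧ (∀ v, (G x).payoff ((G x).combine q.1 q.2) v = x)
              ∧ (∀ (sW' : V → V) (v : V), (G x).Valid ((G x).combine sW' q.2) →
                  (G x).payoff ((G x).combine sW' q.2) v ≤ x)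
              ∧ (∀ (sB' : V → V) (v : V), (G x).Valid ((G x).combine q.1 sB') →
                  x ≤ (G x).payoff ((G x).combine q.1 sB') v)} := by
      ext x
      simp only [Set.mem_setOf_eq, Set.mem_iUnion, Set.mem_sep_iff]
      constructor
      · rintro ⟨hI, μ, ⟨sW, sB, h1, h2, h3, h4⟩, hconst⟩
        have hμval := hergval x μ ⟨sW, sB, h1, h2, h3, h4⟩ hconst
        exact ⟨(sW, sB), hI, h1, (fun v => by rw [← h2 v, hμval v]),
          (fun sW' v hv => by have h := h3 sW' hv v; rwa [hμval v] at h),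
          (fun sB' v hv => by have h := h4 sB' hv v; rwa [hμval v] at h)⟩
      · rintro ⟨q, hI, h1, h2, h3, h4⟩
        exact ⟨hI, fun _ => x, ⟨q.1, q.2, h1, fun v => (h2 v).symm,
          fun sW' hv v => h3 sW' v hv, fun sB' hv v => h4 sB' v hv⟩, fun _ _ => rfl⟩
    rw [hdecomp]
    apply isClosed_iUnion_of_finite
    intro q
    by_cases hvq : (G 0).Valid ((G 0).combine q.1 q.2)
    · have hs0w : ((G 0).combine q.1 q.2) w = w := hsw 0 _ hvq
      have hT : {x : ℝ | x ∈ Set.Icc (-R) R ∧ (G x).Valid ((G x).combine q.1 q.2)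
              ∧ (∀ v, (G x).payoff ((G x).combine q.1 q.2) v = x)
              ∧ (∀ (sW' : V → V) (v : V), (G x).Valid ((G x).combine sW' q.2) →
                  (G x).payoff ((G x).combine sW' q.2) v ≤ x)
              ∧ (∀ (sB' : V → V) (v : V), (G x).Valid ((G x).combine q.1 sB') →
                  x ≤ (G x).payoff ((G x).combine q.1 sB') v)}
          = Set.Icc (-R) R
            ∩ ((⋂ v : V, {x : ℝ | (G x).payoff ((G 0).combine q.1 q.2) v = x})
            ∩ ((⋂ sW' : V → V, ⋂ v : V, {x : ℝ | (G x).Valid ((G 0).combine sW' q.2) →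
                  (G x).payoff ((G 0).combine sW' q.2) v ≤ x})
            ∩ (⋂ sB' : V → V, ⋂ v : V, {x : ℝ | (G x).Valid ((G 0).combine q.1 sB') →
                  x ≤ (G x).payoff ((G 0).combine q.1 sB') v}))) := by
        ext x
        simp only [Set.mem_setOf_eq, Set.mem_inter_iff, Set.mem_iInter, hCombEq x 0]
        constructor
        · rintro ⟨hI, -, h2, h3, h4⟩
          exact ⟨hI, h2, fun sW' v hv => h3 sW' v hv, fun sB' v hv => h4 sB' v hv⟩
        · rintro ⟨hI, h2, h3, h4⟩
          exact ⟨hI, hValid_tr 0 x _ hvq, h2, fun sW' v hv => h3 sW' v hv,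
            fun sB' v hv => h4 sB' v hv⟩
      rw [hT]
      refine isClosed_Icc.inter (IsClosed.inter ?_ (IsClosed.inter ?_ ?_))
      · exact isClosed_iInter fun v =>
          isClosed_eq (hcont _ hs0w v) continuous_id
      · refine isClosed_iInter fun sW' => isClosed_iInter fun v => ?_
        by_cases hv' : (G 0).Valid ((G 0).combine sW' q.2)
        · have heq : {x : ℝ | (G x).Valid ((G 0).combine sW' q.2) →
              (G x).payoff ((G 0).combine sW' q.2) v ≤ x}
              = {x : ℝ | (G x).payoff ((G 0).combine sW' q.2) v ≤ x} := by
            ext x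
            simp only [Set.mem_setOf_eq]
            exact ⟨fun h => h (hValid_tr 0 x _ hv'), fun h _ => h⟩
          rw [heq]
          exact isClosed_le (hcont _ (hsw 0 _ hv') v) continuous_id
        · have heq : {x : ℝ | (G x).Valid ((G 0).combine sW' q.2) →
              (G x).payoff ((G 0).combine sW' q.2) v ≤ x} = Set.univ := by
            apply Set.eq_univ_of_forall
            intro x hvx
            exact absurd (hValid_tr x 0 _ hvx) hv'
          rw [heq]
          exact isClosed_univ
      · refine isClosed_iInter fun sB' => isClosed_iInter fun v => ?_
        by_cases hv' : (G 0).Valid ((G 0).combine q.1 sB')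
        · have heq : {x : ℝ | (G x).Valid ((G 0).combine q.1 sB') →
              x ≤ (G x).payoff ((G 0).combine q.1 sB') v}
              = {x : ℝ | x ≤ (G x).payoff ((G 0).combine q.1 sB') v} := by
            ext x
            simp only [Set.mem_setOf_eq]
            exact ⟨fun h => h (hValid_tr 0 x _ hv'), fun h _ => h⟩
          rw [heq]
          exact isClosed_le continuous_id (hcont _ (hsw 0 _ hv') v)
        · have heq : {x : ℝ | (G x).Valid ((G 0).combine q.1 sB') →
              x ≤ (G x).payoff ((G 0).combine q.1 sB') v} = Set.univ := by
            apply Set.eq_univ_of_forall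
            intro x hvx
            exact absurd (hValid_tr x 0 _ hvx) hv'
          rw [heq]
          exact isClosed_univ
    · have hempty : {x : ℝ | x ∈ Set.Icc (-R) R ∧ (G x).Valid ((G x).combine q.1 q.2)
              ∧ (∀ v, (G x).payoff ((G x).combine q.1 q.2) v = x)
              ∧ (∀ (sW' : V → V) (v : V), (G x).Valid ((G x).combine sW' q.2) →
                  (G x).payoff ((G x).combine sW' q.2) v ≤ x)
              ∧ (∀ (sB' : V → V) (v : V), (G x).Valid ((G x).combine q.1 sB') →
                  x ≤ (G x).payoff ((G x).combine q.1 sB') v)} = ∅ := by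
        apply Set.eq_empty_iff_forall_notMem.2
        rintro x ⟨-, h1, -⟩
        rw [hCombEq x 0] at h1
        exact absurd (hValid_tr x 0 _ h1) hvq
      rw [hempty]
      exact isClosed_empty
  -- conclude
  by_cases hne : {x ∈ Set.Icc (-R) R | (G x).Ergodic}.Nonempty
  · have hsub : {x ∈ Set.Icc (-R) R | (G x).Ergodic} ⊆ Set.Icc (-R) R := fun x hx => hx.1
    have hbb : BddBelow {x ∈ Set.Icc (-R) R | (G x).Ergodic} :=
      BddBelow.mono hsub bddBelow_Icc
    have hba : BddAbove {x ∈ Set.Icc (-R) R | (G x).Ergodic} :=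
      BddAbove.mono hsub (bddAbove_Icc (a := -R) (b := R))
    refine ⟨sInf {x ∈ Set.Icc (-R) R | (G x).Ergodic},
      sSup {x ∈ Set.Icc (-R) R | (G x).Ergodic}, ?_⟩
    apply Set.Subset.antisymm
    · exact fun x hx => ⟨csInf_le hbb hx, le_csSup hba hx⟩
    · intro y hy
      exact hord _ y _ (hclosed.csInf_mem hne hbb) (hclosed.csSup_mem hne hba) hy.1 hy.2
  · refine ⟨1, 0, ?_⟩
    rw [Set.not_nonempty_iff_eq_empty.1 hne]
    exact (Set.Icc_eq_empty (by norm_num)).symm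
end
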